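/- arXiv:1212.6848 — 3 statements merged into one kernel-verified Lean document; each statement's English description precedes it below -/
import Mathlib

section
/- For any connected simple graph Q with at least two vertices, at least one of the following properties holds: (A) there exist v ∈ V(Q) and X ⊆ V(Q) such that Q[X] is a connected component of Q−v and Q[X] is a clique; (B) there exist distinct vertices a, b, c ∈ V(Q) such that the induced subgraph Q[{a,b,c}] is isomorphic to the path P3 (exactly the two edges ab and bc) and Q−{a,b,c} is connected; (C) there exist nonadjacent vertices v, b ∈ V(Q) such that Q−{v,b} is disconnected and for all connected components Q[X] of Q−{v,b}, except possibly one, both Q[X∪{v}] and Q[X∪{b}] are cliques. -/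
/-- Sign convention: `true` = positive edge, `false` = negative edge.
An edge `e` is *consistent* with the partition `(A, Aᶜ)` of the vertex set if it is
positive when both endpoints lie on the same side and negative otherwise. -/
def SignConsistent {V : Type*} (sign : Sym2 V → Bool) (A : Set V) (e : Sym2 V) : Prop :=
  ∀ u v : V, e = s(u, v) → (sign e = true ↔ (u ∈ A ↔ v ∈ A))

/-- The number of edges of the balanced subgraph induced by the partition `(A, Aᶜ)`. -/
noncomputable def balCount {V : Type*} (G : SimpleGraph V) (sign : Sym2 V → Bool)
    (A : Set V) : ℕ :=
  {e | e ∈ G.edgeSet ∧ SignConsistent sign A e}.ncard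

/-- `beta G sign` = β(G): the maximum number of edges of a balanced subgraph of the
signed graph `(G, sign)`. -/
noncomputable def beta {V : Type*} (G : SimpleGraph V) (sign : Sym2 V → Bool) : ℕ :=
  sSup {n | ∃ A : Set V, n = balCount G sign A}

/-- The Poljak–Turzík bound `pt G = m/2 + (n − t)/4`, where `m` is the number of edges,
`n` the number of vertices and `t` the number of connected components. -/
noncomputable def pt {V : Type*} (G : SimpleGraph V) : ℚ :=
  (G.edgeSet.ncard : ℚ) / 2 +
    ((Nat.card V : ℚ) - (Nat.card G.ConnectedComponent : ℚ)) / 4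

/-- β of the signed subgraph induced on the vertex set `U`. -/
noncomputable def betaOn {V : Type*} (G : SimpleGraph V) (sign : Sym2 V → Bool)
    (U : Set V) : ℕ :=
  beta (G.induce U) (fun e => sign (Sym2.map Subtype.val e))

/-- `pt` of the subgraph induced on the vertex set `U`. -/
noncomputable def ptOn {V : Type*} (G : SimpleGraph V) (U : Set V) : ℚ :=
  pt (G.induce U)

/-- The signed graph `(G, sign)` is balanced: some partition `(A, Aᶜ)` is consistent
with every edge. -/
def IsBalanced {V : Type*} (G : SimpleGraph V) (sign : Sym2 V → Bool) : Prop :=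
  ∃ A : Set V, ∀ u v : V, G.Adj u v → (sign s(u, v) = true ↔ (u ∈ A ↔ v ∈ A))

/-- `a`, `b`, `c` form a positive triangle: all three edges exist and the number of
negative edges among them is even. -/
def PositiveTriangle {V : Type*} (G : SimpleGraph V) (sign : Sym2 V → Bool)
    (a b c : V) : Prop :=
  G.Adj a b ∧ G.Adj b c ∧ G.Adj c a ∧
    Even ((if sign s(a, b) then 0 else 1) + (if sign s(b, c) then 0 else 1) +
      (if sign s(c, a) then 0 else 1))

/-- `X` is (the vertex set of) a connected component of `G − S`. -/
def IsCompOf {V : Type*} (G : SimpleGraph V) (S X : Set V) : Prop :=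
  Disjoint X S ∧ (G.induce X).Connected ∧
    ∀ x ∈ X, ∀ y : V, G.Adj x y → y ∉ S → y ∈ X

/-- The neighborhood of a vertex set `X`. -/
def nbhd {V : Type*} (G : SimpleGraph V) (X : Set V) : Set V :=
  {v | v ∉ X ∧ ∃ x ∈ X, G.Adj x v}


open Classical

section Infra

variable {V : Type*}

/-- Reachability within a vertex set `S` (all intermediate vertices in `S`). -/
def Rch (G : SimpleGraph V) (S : Set V) : V → V → Prop :=
  Relation.ReflTransGen (fun p q => p ∈ S ∧ q ∈ S ∧ G.Adj p q)

/-- Connectivity of the induced subgraph on `S`, phrased in set language. -/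
def Conn (G : SimpleGraph V) (S : Set V) : Prop :=
  S.Nonempty ∧ ∀ u ∈ S, ∀ v ∈ S, Rch G S u v

/-- The connected component of `y` inside the vertex set `S`. -/
def cmpIn (G : SimpleGraph V) (S : Set V) (y : V) : Set V :=
  {z | z ∈ S ∧ Rch G S y z}

/-- `X` is a connected component of the induced subgraph on `S`. -/
def isCompIn (G : SimpleGraph V) (S X : Set V) : Prop :=
  X ⊆ S ∧ Conn G X ∧ ∀ w ∈ X, ∀ w' ∈ S, G.Adj w w' → w' ∈ X

variable {G : SimpleGraph V} {S S' X Y Z : Set V} {u v w x y z : V}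

theorem Rch.mono (h : S ⊆ S') (hr : Rch G S u v) : Rch G S' u v := by
  induction hr with
  | refl => exact Relation.ReflTransGen.refl
  | tail _ h2 ih => exact ih.tail ⟨h h2.1, h h2.2.1, h2.2.2⟩

theorem Rch.symm (hr : Rch G S u v) : Rch G S v u := by
  have : Symmetric (fun p q => p ∈ S ∧ q ∈ S ∧ G.Adj p q) := by
    intro p q ⟨h1, h2, h3⟩; exact ⟨h2, h1, h3.symm⟩
  haveI : Std.Symm (fun p q => p ∈ S ∧ q ∈ S ∧ G.Adj p q) := ⟨this⟩
  exact (Relation.ReflTransGen.stdSymm (r := fun p q => p ∈ S ∧ q ∈ S ∧ G.Adj p q)).symm _ _ hr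

theorem rch_of_adj (hu : u ∈ S) (hv : v ∈ S) (h : G.Adj u v) : Rch G S u v :=
  Relation.ReflTransGen.single ⟨hu, hv, h⟩

theorem Rch.mem_right (hu : u ∈ S) (hr : Rch G S u v) : v ∈ S := by
  induction hr with
  | refl => exact hu
  | tail _ h2 _ => exact h2.2.1

/-- Reachability stays inside a set closed under adjacency. -/
theorem Rch.stay (hcl : ∀ w ∈ X, ∀ w' ∈ S, G.Adj w w' → w' ∈ X)
    (hu : u ∈ X) (hr : Rch G S u v) : v ∈ X := by
  induction hr with
  | refl => exact hu
  | tail _ h2 ih => exact hcl _ ih _ h2.2.1 h2.2.2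

theorem not_conn_of_closed (hXS : X ⊆ S) (hne : X.Nonempty)
    (hcl : ∀ w ∈ X, ∀ w' ∈ S, G.Adj w w' → w' ∈ X)
    (hz : z ∈ S) (hzX : z ∉ X) : ¬ Conn G S := by
  rintro ⟨-, hco⟩
  obtain ⟨u, hu⟩ := hne
  exact hzX (Rch.stay hcl hu (hco u (hXS hu) z hz))

theorem conn_singleton : Conn G {y} :=
  ⟨⟨y, rfl⟩, by rintro u rfl v rfl; exact Relation.ReflTransGen.refl⟩

theorem conn_union (h1 : Conn G S) (h2 : Conn G S')
    (hs : u ∈ S) (hs' : v ∈ S') (hadj : G.Adj u v ∨ u = v) : Conn G (S ∪ S') := by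
  have key : Rch G (S ∪ S') u v := by
    rcases hadj with h | rfl
    · exact rch_of_adj (Or.inl hs) (Or.inr hs') h
    · exact Relation.ReflTransGen.refl
  refine ⟨⟨u, Or.inl hs⟩, ?_⟩
  rintro p (hp | hp) q (hq | hq)
  · exact (h1.2 p hp q hq).mono Set.subset_union_left
  · exact (((h1.2 p hp u hs).mono Set.subset_union_left).trans key).trans
      ((h2.2 v hs' q hq).mono Set.subset_union_right)
  · exact ((((h2.2 p hp v hs').mono Set.subset_union_right).trans key.symm)).trans
      ((h1.2 u hs q hq).mono Set.subset_union_left)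
  · exact (h2.2 p hp q hq).mono Set.subset_union_right

theorem conn_insert (h1 : Conn G S) (hs : u ∈ S) (hadj : G.Adj u v) :
    Conn G (insert v S) := by
  have := conn_union h1 (conn_singleton (y := v)) hs rfl (Or.inl hadj)
  rwa [Set.union_singleton] at this

theorem mem_cmpIn_self (hy : y ∈ S) : y ∈ cmpIn G S y :=
  ⟨hy, Relation.ReflTransGen.refl⟩

theorem cmpIn_subset : cmpIn G S y ⊆ S := fun _ h => h.1

/-- Paths witnessing membership in a component can be taken inside the component. -/
theorem rch_cmpIn (hy : y ∈ S) (hz : z ∈ cmpIn G S y) : Rch G (cmpIn G S y) y z := by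
  obtain ⟨hzS, hr⟩ := hz
  clear hzS
  induction hr with
  | refl => exact Relation.ReflTransGen.refl
  | @tail p q h1 h2 ih =>
    have hp : p ∈ cmpIn G S y := ⟨h2.1, h1⟩
    have hq : q ∈ cmpIn G S y := ⟨h2.2.1, h1.tail h2⟩
    exact (ih).tail ⟨hp, hq, h2.2.2⟩

theorem conn_cmpIn (hy : y ∈ S) : Conn G (cmpIn G S y) := by
  refine ⟨⟨y, mem_cmpIn_self hy⟩, fun p hp q hq => ?_⟩
  exact (rch_cmpIn hy hp).symm.trans (rch_cmpIn hy hq)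

theorem cmpIn_closed (hz : z ∈ cmpIn G S y) (hw : w ∈ S) (h : G.Adj z w) :
    w ∈ cmpIn G S y := ⟨hw, hz.2.tail ⟨hz.1, hw, h⟩⟩

theorem isCompIn_cmpIn (hy : y ∈ S) : isCompIn G S (cmpIn G S y) :=
  ⟨cmpIn_subset, conn_cmpIn hy, fun _ hz _ hw h => cmpIn_closed hz hw h⟩

theorem isCompIn.eq_cmpIn (hX : isCompIn G S X) (hy : y ∈ X) : X = cmpIn G S y := by
  obtain ⟨hXS, hXc, hXcl⟩ := hX
  apply Set.eq_of_subset_of_subset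
  · intro z hz
    exact ⟨hXS hz, (hXc.2 y hy z hz).mono hXS⟩
  · intro z hz
    exact Rch.stay hXcl hy hz.2

theorem rch_of_cmpIn_mem (hz : z ∈ cmpIn G S y) : Rch G S y z := hz.2

theorem rch_of_cmp_both (h1 : y ∈ cmpIn G S u) (h2 : y ∈ cmpIn G S v) :
    Rch G S u v := (h1.2).trans (h2.2).symm


theorem Rch.mem_right' (hr : Rch G S u v) (hu : u ∈ S) : v ∈ S := by
  induction hr with
  | refl => exact hu
  | tail _ h2 _ => exact h2.2.1

theorem rch_of_reachable {a b : ↥S} (h : (G.induce S).Reachable a b) :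
    Rch G S a.1 b.1 := by
  obtain ⟨wlk⟩ := h
  induction wlk with
  | nil => exact Relation.ReflTransGen.refl
  | @cons p q r h1 _ ih =>
    exact Relation.ReflTransGen.head ⟨p.2, q.2, h1⟩ ih

theorem reachable_of_rch (h : Rch G S u v) (hu : u ∈ S) :
    ∀ (hv : v ∈ S), (G.induce S).Reachable ⟨u, hu⟩ ⟨v, hv⟩ := by
  induction h with
  | refl => intro hv; rfl
  | @tail p q h1 h2 ih =>
    intro hv
    exact (ih h2.1).trans (SimpleGraph.Adj.reachable (by exact h2.2.2))

theorem conn_iff_induce : Conn G S ↔ (G.induce S).Connected := by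
  constructor
  · rintro ⟨⟨p, hp⟩, h⟩
    haveI : Nonempty ↥S := ⟨⟨p, hp⟩⟩
    refine ⟨fun a b => ?_⟩
    exact reachable_of_rch (h a.1 a.2 b.1 b.2) a.2 b.2
  · rintro h
    obtain ⟨p⟩ := h.nonempty
    refine ⟨⟨p.1, p.2⟩, fun a ha b hb => ?_⟩
    exact rch_of_reachable (h.preconnected ⟨a, ha⟩ ⟨b, hb⟩)

theorem conn_univ_of_connected (h : G.Connected) : Conn G (Set.univ : Set V) := by
  obtain ⟨p⟩ := h.nonempty
  have hpre := h.preconnected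
  refine ⟨⟨p, trivial⟩, fun a _ b _ => ?_⟩
  obtain ⟨wlk⟩ := hpre a b
  induction wlk with
  | nil => exact Relation.ReflTransGen.refl
  | cons h1 _ ih => exact Relation.ReflTransGen.head ⟨trivial, trivial, h1⟩ (ih trivial trivial)

/-- First exit of a path from a set. -/
theorem exists_exit (hr : Rch G S u v) (hu : u ∈ X) (hv : v ∉ X) :
    ∃ w ∈ X, ∃ z ∈ S, z ∉ X ∧ G.Adj w z := by
  induction hr with
  | refl => exact absurd hu hv
  | @tail p q h1 h2 ih =>
    by_cases hp : p ∈ X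
    · exact ⟨p, hp, q, h2.2.1, hv, h2.2.2⟩
    · exact ih hp

/-- Prefix of a path before entering a set. -/
theorem exists_prefix (hr : Rch G S u v) : ∀ (_ : u ∉ X) (_ : v ∈ X),
    ∃ w ∈ S \ X, Rch G (S \ X) u w ∧ ∃ t ∈ X, G.Adj w t := by
  induction hr using Relation.ReflTransGen.head_induction_on with
  | refl => intro h1 h2; exact absurd h2 h1
  | @head p q hpq hqv ih =>
    intro hp hv
    by_cases hq : q ∈ X
    · exact ⟨p, ⟨hpq.1, hp⟩, Relation.ReflTransGen.refl, q, hq, hpq.2.2⟩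
    · obtain ⟨w, hw, hrw, t, ht, hadj⟩ := ih hq hv
      exact ⟨w, hw, Relation.ReflTransGen.head ⟨⟨hpq.1, hp⟩, ⟨hpq.2.1, hq⟩, hpq.2.2⟩ hrw,
        t, ht, hadj⟩

/-- A connected non-clique set contains an induced path on three vertices. -/
theorem exists_induced_P3 (hc : Conn G S) (hnc : ¬ G.IsClique S) :
    ∃ a ∈ S, ∃ b ∈ S, ∃ c ∈ S, G.Adj a b ∧ G.Adj b c ∧ ¬ G.Adj a c ∧ a ≠ c := by
  have key : ∀ u w : V, Rch G S u w → G.Adj u w ∨ u = w ∨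
      (∃ a ∈ S, ∃ b ∈ S, ∃ c ∈ S, G.Adj a b ∧ G.Adj b c ∧ ¬ G.Adj a c ∧ a ≠ c) := by
    intro u w hr
    induction hr using Relation.ReflTransGen.head_induction_on with
    | refl => exact Or.inr (Or.inl rfl)
    | @head p q hpq hqw ih =>
      rcases ih with h | h | h
      · by_cases hpw : G.Adj p w
        · exact Or.inl hpw
        · by_cases hpw' : p = w
          · exact Or.inr (Or.inl hpw')
          · refine Or.inr (Or.inr ⟨p, hpq.1, q, hpq.2.1, w, Rch.mem_right' hqw hpq.2.1, hpq.2.2, h, hpw, hpw'⟩)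
      · subst h; exact Or.inl hpq.2.2
      · exact Or.inr (Or.inr h)
  rw [SimpleGraph.isClique_iff, Set.Pairwise] at hnc
  push_neg at hnc
  obtain ⟨u, hu, w, hw, hne, hnadj⟩ := hnc
  rcases key u w (hc.2 u hu w hw) with h | h | h
  · exact absurd h hnadj
  · exact absurd h hne
  · exact h

end Infra

section Core

variable {V : Type*} [Fintype V]

/-- `a b c` form an induced path (edges ab, bc; no edge ac) inside `S`. -/
def isP3 (G : SimpleGraph V) (S : Set V) (a b c : V) : Prop :=
  a ∈ S ∧ b ∈ S ∧ c ∈ S ∧ G.Adj a b ∧ G.Adj b c ∧ ¬ G.Adj a c ∧ a ≠ c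

theorem isP3.swap {G : SimpleGraph V} {S : Set V} {a b c : V}
    (h : isP3 G S a b c) : isP3 G S c b a :=
  ⟨h.2.2.1, h.2.1, h.1, h.2.2.2.2.1.symm, h.2.2.2.1.symm,
    fun hh => h.2.2.2.2.2.1 hh.symm, h.2.2.2.2.2.2.symm⟩

theorem tripleSwap (a b c : V) : ({c, b, a} : Set V) = {a, b, c} := by
  ext v; simp only [Set.mem_insert_iff, Set.mem_singleton_iff]; tauto

/-- The component of `x` in `U` minus the triple. -/
def Zv (G : SimpleGraph V) (U : Set V) (x a b c : V) : Set V :=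
  cmpIn G (U \ {a,b,c}) x

/-- The union of components away from `x` in `U` minus the triple. -/
def Wv (G : SimpleGraph V) (U : Set V) (x a b c : V) : Set V :=
  (U \ {a,b,c}) \ Zv G U x a b c

theorem Zv_swap (G : SimpleGraph V) (U : Set V) (x a b c : V) :
    Zv G U x c b a = Zv G U x a b c := by
  unfold Zv; rw [tripleSwap]

theorem Wv_swap (G : SimpleGraph V) (U : Set V) (x a b c : V) :
    Wv G U x c b a = Wv G U x a b c := by
  unfold Wv; rw [Zv_swap]; rw [tripleSwap]

/-- Context of the core (2-connected) case of the structural lemma. -/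
structure CoreCtx (G : SimpleGraph V) (U : Set V) (x : V) (a b c : V) : Prop where
  hU : Conn G U
  hx : x ∈ U
  h2c : ∀ u ∈ U, Conn G (U \ {u})
  hnB : ∀ α β γ, isP3 G (U \ {x}) α β γ → ¬ Conn G (U \ {α, β, γ})
  hP3 : isP3 G (U \ {x}) a b c
  hmin : ∀ α β γ, isP3 G (U \ {x}) α β γ →
    (Wv G U x a b c).ncard ≤ ((U \ {α,β,γ}) \ cmpIn G (U \ {α,β,γ}) x).ncard

variable {G : SimpleGraph V} {U : Set V} {x a b c : V}

theorem CoreCtx.swap (h : CoreCtx G U x a b c) : CoreCtx G U x c b a := by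
  refine ⟨h.hU, h.hx, h.h2c, h.hnB, h.hP3.swap, ?_⟩
  intro α β γ hP
  rw [Wv_swap]
  exact h.hmin α β γ hP

end Core

section CoreFacts

variable {V : Type*} [Fintype V]
variable {G : SimpleGraph V} {U : Set V} {x a b c : V}

namespace CoreCtx

theorem haU (h : CoreCtx G U x a b c) : a ∈ U := h.hP3.1.1
theorem hbU (h : CoreCtx G U x a b c) : b ∈ U := h.hP3.2.1.1
theorem hcU (h : CoreCtx G U x a b c) : c ∈ U := h.hP3.2.2.1.1
theorem hax (h : CoreCtx G U x a b c) : a ≠ x := by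
  have := h.hP3.1.2; simpa using this
theorem hbx (h : CoreCtx G U x a b c) : b ≠ x := by
  have := h.hP3.2.1.2; simpa using this
theorem hcx (h : CoreCtx G U x a b c) : c ≠ x := by
  have := h.hP3.2.2.1.2; simpa using this
theorem eab (h : CoreCtx G U x a b c) : G.Adj a b := h.hP3.2.2.2.1
theorem ebc (h : CoreCtx G U x a b c) : G.Adj b c := h.hP3.2.2.2.2.1
theorem nac (h : CoreCtx G U x a b c) : ¬ G.Adj a c := h.hP3.2.2.2.2.2.1
theorem hac (h : CoreCtx G U x a b c) : a ≠ c := h.hP3.2.2.2.2.2.2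

theorem hxS3 (h : CoreCtx G U x a b c) : x ∈ U \ ({a,b,c} : Set V) := by
  refine ⟨h.hx, ?_⟩
  simp only [Set.mem_insert_iff, Set.mem_singleton_iff]
  push_neg
  exact ⟨fun hh => h.hax hh.symm, fun hh => h.hbx hh.symm, fun hh => h.hcx hh.symm⟩

theorem hxZ (h : CoreCtx G U x a b c) : x ∈ Zv G U x a b c :=
  mem_cmpIn_self h.hxS3

theorem Zsub (h : CoreCtx G U x a b c) : Zv G U x a b c ⊆ U \ ({a,b,c} : Set V) :=
  cmpIn_subset

theorem Wsub (h : CoreCtx G U x a b c) : Wv G U x a b c ⊆ U \ ({a,b,c} : Set V) :=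
  Set.diff_subset

theorem WZdisj (h : CoreCtx G U x a b c) {w : V} (hw : w ∈ Wv G U x a b c) :
    w ∉ Zv G U x a b c := hw.2

theorem S3_split (h : CoreCtx G U x a b c) {v : V} (hv : v ∈ U \ ({a,b,c} : Set V)) :
    v ∈ Zv G U x a b c ∨ v ∈ Wv G U x a b c := by
  by_cases hz : v ∈ Zv G U x a b c
  · exact Or.inl hz
  · exact Or.inr ⟨hv, hz⟩

theorem mem_W_props (h : CoreCtx G U x a b c) {w : V} (hw : w ∈ Wv G U x a b c) :
    w ∈ U ∧ w ≠ a ∧ w ≠ b ∧ w ≠ c ∧ w ≠ x := by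
  obtain ⟨⟨hU', hnT⟩, hnZ⟩ := hw
  simp only [Set.mem_insert_iff, Set.mem_singleton_iff] at hnT
  push_neg at hnT
  refine ⟨hU', hnT.1, hnT.2.1, hnT.2.2, ?_⟩
  rintro rfl
  exact hnZ (h.hxZ)

theorem notS3_a (h : CoreCtx G U x a b c) : a ∉ U \ ({a,b,c} : Set V) := by
  rintro ⟨-, hn⟩; exact hn (by simp)
theorem notS3_b (h : CoreCtx G U x a b c) : b ∉ U \ ({a,b,c} : Set V) := by
  rintro ⟨-, hn⟩; exact hn (by simp)
theorem notS3_c (h : CoreCtx G U x a b c) : c ∉ U \ ({a,b,c} : Set V) := by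
  rintro ⟨-, hn⟩; exact hn (by simp)

theorem hWne (h : CoreCtx G U x a b c) : (Wv G U x a b c).Nonempty := by
  have hnc := h.hnB a b c h.hP3
  by_contra hemp
  rw [Set.not_nonempty_iff_eq_empty] at hemp
  apply hnc
  refine ⟨⟨x, h.hxS3⟩, fun p hp q hq => ?_⟩
  have hpZ : p ∈ Zv G U x a b c := by
    rcases h.S3_split hp with hh | hh
    · exact hh
    · rw [hemp] at hh; exact absurd hh (Set.notMem_empty p)
  have hqZ : q ∈ Zv G U x a b c := by
    rcases h.S3_split hq with hh | hh
    · exact hh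
    · rw [hemp] at hh; exact absurd hh (Set.notMem_empty q)
  exact (rch_of_cmpIn_mem hpZ).symm.trans (rch_of_cmpIn_mem hqZ)

theorem cmp_sub_W (h : CoreCtx G U x a b c) {w : V} (hw : w ∈ Wv G U x a b c) :
    cmpIn G (U \ ({a,b,c} : Set V)) w ⊆ Wv G U x a b c := by
  intro z hz
  refine ⟨hz.1, fun hzZ => ?_⟩
  have hr : Rch G (U \ ({a,b,c} : Set V)) x w :=
    (rch_of_cmpIn_mem hzZ).trans (rch_of_cmpIn_mem hz).symm
  exact h.WZdisj hw ⟨hw.1, hr⟩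

theorem mem_cmp_self_W (h : CoreCtx G U x a b c) {w : V} (hw : w ∈ Wv G U x a b c) :
    w ∈ cmpIn G (U \ ({a,b,c} : Set V)) w := mem_cmpIn_self (h.Wsub hw)

end CoreCtx
end CoreFacts

section CoreKill

variable {V : Type*} [Fintype V]
variable {G : SimpleGraph V} {U : Set V} {x a b c : V}

namespace CoreCtx

/-- Every component of `U` minus the triple has a neighbour in the triple other
than any prescribed `t` (otherwise `t` would be a cutvertex). -/
theorem att2 (h : CoreCtx G U x a b c) {Y : Set V}
    (hY : isCompIn G (U \ ({a,b,c} : Set V)) Y) {t : V} (ht : t ∈ ({a,b,c} : Set V))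
    (hwit : ∃ p ∈ U \ ({t} : Set V), p ∉ Y) :
    ∃ d ∈ Y, ∃ t' ∈ ({a,b,c} : Set V), t' ≠ t ∧ G.Adj d t' := by
  by_contra hno
  push_neg at hno
  have htU : t ∈ U := by
    rcases ht with rfl | rfl | rfl
    exacts [h.haU, h.hbU, h.hcU]
  obtain ⟨p, hpU, hpY⟩ := hwit
  have hcl : ∀ w ∈ Y, ∀ w' ∈ U \ ({t} : Set V), G.Adj w w' → w' ∈ Y := by
    intro w hw w' hw' hadj
    by_cases hw'T : w' ∈ ({a,b,c} : Set V)
    · exact absurd hadj (hno w hw w' hw'T (fun hh => hw'.2 (by simp [hh])))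
    · exact hY.2.2 w hw w' ⟨hw'.1, hw'T⟩ hadj
  have hYsub : Y ⊆ U \ ({t} : Set V) := by
    intro y hy
    have := hY.1 hy
    exact ⟨this.1, fun hh => this.2 (by
      simp only [Set.mem_singleton_iff] at hh
      subst hh; exact ht)⟩
  exact not_conn_of_closed hYsub hY.2.1.1 hcl hpU hpY (h.h2c t htU)

/-- The kill lemma: exhibiting an induced `P₃` avoiding `x` whose far side is
a set smaller than `W` contradicts minimality. -/
theorem kill (h : CoreCtx G U x a b c) {α β γ : V}
    (hP3' : isP3 G (U \ ({x} : Set V)) α β γ) {F : Set V}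
    (hF : F.ncard < (Wv G U x a b c).ncard)
    (hreach : ∀ v ∈ U \ ({α,β,γ} : Set V), v ∉ F →
      Rch G (U \ ({α,β,γ} : Set V)) x v) : False := by
  have hxT' : x ∈ U \ ({α,β,γ} : Set V) := by
    refine ⟨h.hx, ?_⟩
    simp only [Set.mem_insert_iff, Set.mem_singleton_iff]
    push_neg
    have hα : α ≠ x := by simpa using hP3'.1.2
    have hβ : β ≠ x := by simpa using hP3'.2.1.2
    have hγ : γ ≠ x := by simpa using hP3'.2.2.1.2
    exact ⟨fun hh => hα hh.symm, fun hh => hβ hh.symm, fun hh => hγ hh.symm⟩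
  have hsub : (U \ ({α,β,γ} : Set V)) \ cmpIn G (U \ ({α,β,γ} : Set V)) x ⊆ F := by
    intro v hv
    by_contra hvF
    exact hv.2 ⟨hv.1, hreach v hv.1 hvF⟩
  have h1 := Set.ncard_le_ncard hsub (Set.toFinite F)
  have h2 := h.hmin α β γ hP3'
  omega

end CoreCtx
end CoreKill

section CoreKills2

variable {V : Type*} [Fintype V]
variable {G : SimpleGraph V} {U : Set V} {x a b c : V}

namespace CoreCtx

theorem Zv_sub_of (h : CoreCtx G U x a b c) {T' : Set V}
    (hT' : ∀ t ∈ T', t ∈ ({a,b,c} : Set V) ∨ t ∈ Wv G U x a b c) :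
    Zv G U x a b c ⊆ U \ T' := by
  intro z hz
  refine ⟨(h.Zsub hz).1, fun hzT => ?_⟩
  rcases hT' z hzT with hh | hh
  · exact (h.Zsub hz).2 hh
  · exact hh.2 hz

theorem rch_x_of_Z (h : CoreCtx G U x a b c) {T' : Set V}
    (hsub : Zv G U x a b c ⊆ U \ T') {z : V} (hz : z ∈ Zv G U x a b c) :
    Rch G (U \ T') x z :=
  (rch_cmpIn h.hxS3 hz).mono hsub

/-- KL3: if `Z` attaches to `c`, no `d ∈ W` adjacent to `b` can miss `a`. -/
theorem kill_abd (h : CoreCtx G U x a b c)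
    (hcZ : ∃ z ∈ Zv G U x a b c, G.Adj z c) {d : V} (hd : d ∈ Wv G U x a b c)
    (hdb : G.Adj b d) (hnad : ¬ G.Adj a d) : False := by
  obtain ⟨hdU, hda, hdb', hdc, hdx⟩ := h.mem_W_props hd
  have hP3' : isP3 G (U \ ({x} : Set V)) a b d := by
    refine ⟨⟨h.haU, by simp [h.hax]⟩, ⟨h.hbU, by simp [h.hbx]⟩, ⟨hdU, by simp [hdx]⟩,
      h.eab, hdb, hnad, fun hh => hda hh.symm⟩
  refine h.kill hP3' (F := Wv G U x a b c \ {d}) ?_ ?_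
  · exact Set.ncard_lt_ncard (by
      refine ⟨Set.diff_subset, fun hsub => ?_⟩
      exact (hsub hd).2 rfl) (Set.toFinite _)
  · intro v hv hvF
    have hZsub : Zv G U x a b c ⊆ U \ ({a,b,d} : Set V) := by
      refine h.Zv_sub_of ?_
      intro t ht
      rcases ht with rfl | rfl | rfl
      · exact Or.inl (by simp)
      · exact Or.inl (by simp)
      · exact Or.inr hd
    obtain ⟨z₀, hz₀, hz₀c⟩ := hcZ
    have hcT' : c ∈ U \ ({a,b,d} : Set V) := by
      refine ⟨h.hcU, ?_⟩
      simp only [Set.mem_insert_iff, Set.mem_singleton_iff]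
      push_neg
      exact ⟨fun hh => h.hac hh.symm, fun hh => (h.ebc.ne) hh.symm, fun hh => hdc hh.symm⟩
    have hrc : Rch G (U \ ({a,b,d} : Set V)) x c :=
      (h.rch_x_of_Z hZsub hz₀).tail ⟨hZsub hz₀, hcT', hz₀c⟩
    -- cases on v
    have hvU := hv.1
    have hvn : v ≠ a ∧ v ≠ b ∧ v ≠ d := by
      have := hv.2
      simp only [Set.mem_insert_iff, Set.mem_singleton_iff] at this
      push_neg at this
      exact this
    by_cases hvc : v = c
    · subst hvc; exact hrc
    · have hvS3 : v ∈ U \ ({a,b,c} : Set V) := by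
        refine ⟨hvU, ?_⟩
        simp only [Set.mem_insert_iff, Set.mem_singleton_iff]
        push_neg
        exact ⟨hvn.1, hvn.2.1, hvc⟩
      rcases h.S3_split hvS3 with hz | hw
      · exact h.rch_x_of_Z hZsub hz
      · exact absurd (⟨hw, fun hh => hvn.2.2 hh⟩ : v ∈ Wv G U x a b c \ {d}) hvF

end CoreCtx
end CoreKills2

section CoreKills3

variable {V : Type*} [Fintype V]
variable {G : SimpleGraph V} {U : Set V} {x a b c : V}

namespace CoreCtx

theorem x_notin_W (h : CoreCtx G U x a b c) : x ∉ Wv G U x a b c :=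
  fun hh => hh.2 h.hxZ

theorem x_notin_cmpW (h : CoreCtx G U x a b c) {w : V} (hw : w ∈ Wv G U x a b c) :
    x ∉ cmpIn G (U \ ({a,b,c} : Set V)) w :=
  fun hh => h.x_notin_W (h.cmp_sub_W hw hh)

theorem x_ne_t (h : CoreCtx G U x a b c) {t : V} (ht : t ∈ ({a,b,c} : Set V)) :
    x ≠ t := by
  rcases ht with rfl | rfl | rfl
  · exact fun hh => h.hax hh.symm
  · exact fun hh => h.hbx hh.symm
  · exact fun hh => h.hcx hh.symm

/-- Reach a vertex of a far component via one of its attachments other than `t`. -/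
theorem reach_comp_via (h : CoreCtx G U x a b c) {T' : Set V} {v : V}
    (hv : v ∈ Wv G U x a b c)
    (hdisj : ∀ y ∈ cmpIn G (U \ ({a,b,c} : Set V)) v, y ∉ T')
    {t : V} (ht : t ∈ ({a,b,c} : Set V))
    (hrt : ∀ t', t' ∈ ({a,b,c} : Set V) → t' ≠ t →
      t' ∈ U \ T' ∧ Rch G (U \ T') x t') :
    Rch G (U \ T') x v := by
  have hvS3 := h.Wsub hv
  obtain ⟨d₂, hd₂, t₂, ht₂, ht₂t, hadj⟩ :=
    h.att2 (isCompIn_cmpIn hvS3) ht ⟨x, ⟨h.hx, by simp [h.x_ne_t ht]⟩, h.x_notin_cmpW hv⟩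
  obtain ⟨ht₂T', hrt₂⟩ := hrt t₂ ht₂ ht₂t
  have hd₂T' : d₂ ∈ U \ T' := ⟨(h.Wsub (h.cmp_sub_W hv hd₂)).1, hdisj d₂ hd₂⟩
  have hxd₂ : Rch G (U \ T') x d₂ := hrt₂.tail ⟨ht₂T', hd₂T', hadj.symm⟩
  have hdv : Rch G (U \ T') d₂ v :=
    ((rch_cmpIn hvS3 hd₂).symm).mono (fun y hy =>
      ⟨(h.Wsub (h.cmp_sub_W hv hy)).1, hdisj y hy⟩)
  exact hxd₂.trans hdv

/-- KL1 / P2: every far component is a clique. -/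
theorem comp_clique (h : CoreCtx G U x a b c) {w : V} (hw : w ∈ Wv G U x a b c) :
    G.IsClique (cmpIn G (U \ ({a,b,c} : Set V)) w) := by
  by_contra hnc
  set Dw := cmpIn G (U \ ({a,b,c} : Set V)) w with hDw
  have hDwW : Dw ⊆ Wv G U x a b c := h.cmp_sub_W hw
  obtain ⟨α, hα, β, hβ, γ, hγ, e1, e2, e3, e4⟩ :=
    exists_induced_P3 (conn_cmpIn (h.Wsub hw)) hnc
  have hP3' : isP3 G (U \ ({x} : Set V)) α β γ := by
    refine ⟨?_, ?_, ?_, e1, e2, e3, e4⟩ <;>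
      [exact ⟨(h.Wsub (hDwW hα)).1, by simp [(h.mem_W_props (hDwW hα)).2.2.2.2]⟩;
       exact ⟨(h.Wsub (hDwW hβ)).1, by simp [(h.mem_W_props (hDwW hβ)).2.2.2.2]⟩;
       exact ⟨(h.Wsub (hDwW hγ)).1, by simp [(h.mem_W_props (hDwW hγ)).2.2.2.2]⟩]
  refine h.kill hP3' (F := Dw \ ({α,β,γ} : Set V)) ?_ ?_
  · refine Set.ncard_lt_ncard ⟨fun y hy => hDwW hy.1, fun hsub => ?_⟩ (Set.toFinite _)
    exact (hsub (hDwW hα)).2 (by simp)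
  · intro v hv hvF
    -- T' = {α,β,γ} ⊆ Dw ⊆ W; so a,b,c,Z and other comps survive
    have hTDw : ∀ y ∈ ({α,β,γ} : Set V), y ∈ Dw := by
      rintro y (rfl | rfl | rfl) <;> assumption
    have habcT' : ∀ t ∈ ({a,b,c} : Set V), t ∈ U \ ({α,β,γ} : Set V) := by
      intro t ht
      have htU : t ∈ U := by rcases ht with rfl | rfl | rfl; exacts [h.haU, h.hbU, h.hcU]
      refine ⟨htU, fun hh => ?_⟩
      exact (h.Wsub (hDwW (hTDw t hh))).2 ht
    have hZsub : Zv G U x a b c ⊆ U \ ({α,β,γ} : Set V) :=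
      h.Zv_sub_of (fun t ht => Or.inr (hDwW (hTDw t ht)))
    -- reach b then a and c
    obtain ⟨z₁, hz₁, t₁, ht₁, ht₁a, hadj₁⟩ :=
      h.att2 (isCompIn_cmpIn h.hxS3) (show a ∈ ({a,b,c} : Set V) by simp)
        ⟨w, ⟨(h.Wsub hw).1, by simp [(h.mem_W_props hw).2.1]⟩, h.WZdisj hw⟩
    have hrt₁ : Rch G (U \ ({α,β,γ} : Set V)) x t₁ :=
      (h.rch_x_of_Z hZsub hz₁).tail ⟨hZsub hz₁, habcT' t₁ ht₁, hadj₁⟩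
    have hrb : Rch G (U \ ({α,β,γ} : Set V)) x b := by
      rcases ht₁ with rfl | rfl | rfl
      · exact absurd rfl ht₁a
      · exact hrt₁
      · exact hrt₁.tail ⟨habcT' _ (by simp), habcT' b (by simp), h.ebc.symm⟩
    have hra : Rch G (U \ ({α,β,γ} : Set V)) x a :=
      hrb.tail ⟨habcT' b (by simp), habcT' a (by simp), h.eab.symm⟩
    have hrc : Rch G (U \ ({α,β,γ} : Set V)) x c :=
      hrb.tail ⟨habcT' b (by simp), habcT' c (by simp), h.ebc⟩
    -- now cases on v
    by_cases hvT : v ∈ ({a,b,c} : Set V)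
    · rcases hvT with rfl | rfl | rfl
      exacts [hra, hrb, hrc]
    · have hvS3 : v ∈ U \ ({a,b,c} : Set V) := ⟨hv.1, hvT⟩
      rcases h.S3_split hvS3 with hz | hvW
      · exact h.rch_x_of_Z hZsub hz
      · by_cases hvDw : v ∈ Dw
        · exact absurd ⟨hvDw, hv.2⟩ hvF
        · -- v in another component
          refine h.reach_comp_via hvW ?_ (show a ∈ ({a,b,c} : Set V) by simp) ?_
          · intro y hy hyT
            have hyDw := hTDw y hyT
            exact hvDw (by
              have : Rch G (U \ ({a,b,c} : Set V)) w v :=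
                rch_of_cmp_both hyDw (by exact hy)
              exact ⟨hvS3, this⟩)
          · intro t' ht' ht'a
            refine ⟨habcT' t' ht', ?_⟩
            rcases ht' with rfl | rfl | rfl
            · exact absurd rfl ht'a
            · exact hrb
            · exact hrc

end CoreCtx
end CoreKills3

section CoreKills4

variable {V : Type*} [Fintype V]
variable {G : SimpleGraph V} {U : Set V} {x a b c : V}

namespace CoreCtx

/-- KL2: a far component with no attachment to `b` is fully joined to `a`. -/
theorem full_a_of_not_b (h : CoreCtx G U x a b c) {w : V} (hw : w ∈ Wv G U x a b c)
    (hnb : ∀ d ∈ cmpIn G (U \ ({a,b,c} : Set V)) w, ¬ G.Adj d b)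
    {ds : V} (hds : ds ∈ cmpIn G (U \ ({a,b,c} : Set V)) w) : G.Adj ds a := by
  by_contra hnda
  set Dw := cmpIn G (U \ ({a,b,c} : Set V)) w with hDwdef
  have hDwW : Dw ⊆ Wv G U x a b c := h.cmp_sub_W hw
  obtain ⟨da, hda, t₁, ht₁, ht₁c, hadj₁⟩ :=
    h.att2 (isCompIn_cmpIn (h.Wsub hw)) (show c ∈ ({a,b,c} : Set V) by simp)
      ⟨x, ⟨h.hx, by simp [h.x_ne_t (show c ∈ ({a,b,c} : Set V) by simp)]⟩,
        h.x_notin_cmpW hw⟩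
  have hdaa : G.Adj da a := by
    rcases ht₁ with rfl | rfl | rfl
    · exact hadj₁
    · exact absurd hadj₁ (hnb da hda)
    · exact absurd rfl ht₁c
  have hdads : da ≠ ds := by rintro rfl; exact hnda hdaa
  have hP3' : isP3 G (U \ ({x} : Set V)) a da ds := by
    refine ⟨⟨h.haU, by simp [h.hax]⟩,
      ⟨(h.Wsub (hDwW hda)).1, by simp [(h.mem_W_props (hDwW hda)).2.2.2.2]⟩,
      ⟨(h.Wsub (hDwW hds)).1, by simp [(h.mem_W_props (hDwW hds)).2.2.2.2]⟩,
      hdaa.symm, h.comp_clique hw hda hds hdads,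
      fun hh => hnda hh.symm,
      fun hh => (h.mem_W_props (hDwW hds)).2.1 hh.symm⟩
  refine h.kill hP3' (F := Dw \ ({da, ds} : Set V)) ?_ ?_
  · refine Set.ncard_lt_ncard ⟨fun y hy => hDwW hy.1, fun hsub => ?_⟩ (Set.toFinite _)
    exact (hsub (hDwW hda)).2 (by simp)
  · intro v hv hvF
    have hT'mem : ∀ y ∈ ({a, da, ds} : Set V), y = a ∨ y ∈ Dw := by
      rintro y (rfl | rfl | rfl)
      exacts [Or.inl rfl, Or.inr hda, Or.inr hds]
    have hbT' : b ∈ U \ ({a, da, ds} : Set V) := by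
      refine ⟨h.hbU, fun hh => ?_⟩
      rcases hT'mem b hh with hh' | hh'
      · exact h.eab.ne' hh'
      · exact (h.mem_W_props (hDwW hh')).2.2.1 rfl
    have hcT' : c ∈ U \ ({a, da, ds} : Set V) := by
      refine ⟨h.hcU, fun hh => ?_⟩
      rcases hT'mem c hh with hh' | hh'
      · exact h.hac hh'.symm
      · exact (h.mem_W_props (hDwW hh')).2.2.2.1 rfl
    have hZsub : Zv G U x a b c ⊆ U \ ({a, da, ds} : Set V) := by
      refine h.Zv_sub_of ?_
      intro t ht
      rcases hT'mem t ht with rfl | hh'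
      · exact Or.inl (by simp)
      · exact Or.inr (hDwW hh')
    -- reach b and c via an attachment of Z avoiding a
    obtain ⟨z₁, hz₁, t₂, ht₂, ht₂a, hadj₂⟩ :=
      h.att2 (isCompIn_cmpIn h.hxS3) (show a ∈ ({a,b,c} : Set V) by simp)
        ⟨w, ⟨(h.Wsub hw).1, by simp [(h.mem_W_props hw).2.1]⟩, h.WZdisj hw⟩
    have hrt₂ : Rch G (U \ ({a, da, ds} : Set V)) x t₂ := by
      refine (h.rch_x_of_Z hZsub hz₁).tail ⟨hZsub hz₁, ?_, hadj₂⟩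
      rcases ht₂ with rfl | rfl | rfl
      · exact absurd rfl ht₂a
      exacts [hbT', hcT']
    have hrb : Rch G (U \ ({a, da, ds} : Set V)) x b := by
      rcases ht₂ with rfl | rfl | rfl
      · exact absurd rfl ht₂a
      · exact hrt₂
      · exact hrt₂.tail ⟨hcT', hbT', h.ebc.symm⟩
    have hrc : Rch G (U \ ({a, da, ds} : Set V)) x c :=
      hrb.tail ⟨hbT', hcT', h.ebc⟩
    -- case analysis on v
    have hvne : v ≠ a ∧ v ≠ da ∧ v ≠ ds := by
      have := hv.2
      simp only [Set.mem_insert_iff, Set.mem_singleton_iff] at this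
      push_neg at this
      exact this
    by_cases hvb : v = b
    · subst hvb; exact hrb
    by_cases hvc : v = c
    · subst hvc; exact hrc
    have hvS3 : v ∈ U \ ({a,b,c} : Set V) := by
      refine ⟨hv.1, ?_⟩
      simp only [Set.mem_insert_iff, Set.mem_singleton_iff]
      push_neg
      exact ⟨hvne.1, hvb, hvc⟩
    rcases h.S3_split hvS3 with hz | hvW
    · exact h.rch_x_of_Z hZsub hz
    · by_cases hvDw : v ∈ Dw
      · exact absurd ⟨hvDw, by
          simp only [Set.mem_insert_iff, Set.mem_singleton_iff]
          push_neg
          exact ⟨hvne.2.1, hvne.2.2⟩⟩ hvF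
      · refine h.reach_comp_via hvW ?_ (show a ∈ ({a,b,c} : Set V) by simp) ?_
        · intro y hy hyT
          rcases hT'mem y hyT with rfl | hh'
          · exact (h.mem_W_props (h.cmp_sub_W hvW hy)).2.1 rfl
          · exact hvDw ⟨hvS3, rch_of_cmp_both hh' hy⟩
        · intro t' ht' ht'a
          rcases ht' with rfl | rfl | rfl
          · exact absurd rfl ht'a
          · exact ⟨hbT', hrb⟩
          · exact ⟨hcT', hrc⟩

/-- KL4: if `Z` attaches to `c` and a far component touches `b`, it is fully
joined to `b`. -/
theorem full_b_of_touch (h : CoreCtx G U x a b c)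
    (hcZ : ∃ z ∈ Zv G U x a b c, G.Adj z c) {w d₀ d' : V} (hw : w ∈ Wv G U x a b c)
    (hd₀ : d₀ ∈ cmpIn G (U \ ({a,b,c} : Set V)) w)
    (hd' : d' ∈ cmpIn G (U \ ({a,b,c} : Set V)) w)
    (hd₀b : G.Adj d₀ b) (hnd'b : ¬ G.Adj d' b) : False := by
  set Dw := cmpIn G (U \ ({a,b,c} : Set V)) w with hDwdef
  have hDwW : Dw ⊆ Wv G U x a b c := h.cmp_sub_W hw
  have hdd : d' ≠ d₀ := by rintro rfl; exact hnd'b hd₀b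
  have hP3' : isP3 G (U \ ({x} : Set V)) d' d₀ b := by
    refine ⟨⟨(h.Wsub (hDwW hd')).1, by simp [(h.mem_W_props (hDwW hd')).2.2.2.2]⟩,
      ⟨(h.Wsub (hDwW hd₀)).1, by simp [(h.mem_W_props (hDwW hd₀)).2.2.2.2]⟩,
      ⟨h.hbU, by simp [h.hbx]⟩,
      h.comp_clique hw hd' hd₀ hdd, hd₀b, hnd'b,
      (h.mem_W_props (hDwW hd')).2.2.1⟩
  have hcard2 : 2 ≤ (Wv G U x a b c).ncard := by
    have hsub : ({d₀, d'} : Set V) ⊆ Wv G U x a b c := by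
      rintro y (rfl | rfl)
      exacts [hDwW hd₀, hDwW hd']
    have := Set.ncard_le_ncard hsub (Set.toFinite _)
    rwa [Set.ncard_pair (Ne.symm hdd)] at this
  refine h.kill hP3' (F := insert a ((Wv G U x a b c) \ ({d₀, d'} : Set V))) ?_ ?_
  · have h1 := Set.ncard_insert_le a ((Wv G U x a b c) \ ({d₀, d'} : Set V))
    have h2 : ((Wv G U x a b c) \ ({d₀, d'} : Set V)).ncard =
        (Wv G U x a b c).ncard - 2 := by
      rw [Set.ncard_diff (by rintro y (rfl | rfl); exacts [hDwW hd₀, hDwW hd'])]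
      rw [Set.ncard_pair (Ne.symm hdd)]
    omega
  · intro v hv hvF
    have hZsub : Zv G U x a b c ⊆ U \ ({d', d₀, b} : Set V) := by
      refine h.Zv_sub_of ?_
      rintro t (rfl | rfl | rfl)
      exacts [Or.inr (hDwW hd'), Or.inr (hDwW hd₀), Or.inl (by simp)]
    obtain ⟨z₀, hz₀, hz₀c⟩ := hcZ
    have hcT' : c ∈ U \ ({d', d₀, b} : Set V) := by
      refine ⟨h.hcU, fun hh => ?_⟩
      rcases hh with rfl | rfl | rfl
      · exact (h.mem_W_props (hDwW hd')).2.2.2.1 rfl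
      · exact (h.mem_W_props (hDwW hd₀)).2.2.2.1 rfl
      · exact h.ebc.ne rfl
    have hrc : Rch G (U \ ({d', d₀, b} : Set V)) x c :=
      (h.rch_x_of_Z hZsub hz₀).tail ⟨hZsub hz₀, hcT', hz₀c⟩
    have hvne : v ≠ d' ∧ v ≠ d₀ ∧ v ≠ b := by
      have := hv.2
      simp only [Set.mem_insert_iff, Set.mem_singleton_iff] at this
      push_neg at this
      exact this
    by_cases hva : v = a
    · exact absurd (by simp [hva]) hvF
    by_cases hvc : v = c
    · subst hvc; exact hrc
    have hvS3 : v ∈ U \ ({a,b,c} : Set V) := by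
      refine ⟨hv.1, ?_⟩
      simp only [Set.mem_insert_iff, Set.mem_singleton_iff]
      push_neg
      exact ⟨hva, hvne.2.2, hvc⟩
    rcases h.S3_split hvS3 with hz | hvW
    · exact h.rch_x_of_Z hZsub hz
    · refine absurd (Set.mem_insert_iff.mpr (Or.inr ?_)) hvF
      refine ⟨hvW, ?_⟩
      simp only [Set.mem_insert_iff, Set.mem_singleton_iff]
      push_neg
      exact ⟨hvne.2.1, hvne.1⟩

/-- KL5: if `Z` attaches to `c`, two different far components cannot both touch `b`. -/
theorem not_two_b_comps (h : CoreCtx G U x a b c)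
    (hcZ : ∃ z ∈ Zv G U x a b c, G.Adj z c) {d₁ d₂ : V}
    (hd₁ : d₁ ∈ Wv G U x a b c) (hd₂ : d₂ ∈ Wv G U x a b c)
    (hsep : d₂ ∉ cmpIn G (U \ ({a,b,c} : Set V)) d₁)
    (e₁ : G.Adj b d₁) (e₂ : G.Adj b d₂) : False := by
  have hne : d₁ ≠ d₂ := by
    rintro rfl; exact hsep (h.mem_cmp_self_W hd₁)
  have hnadj : ¬ G.Adj d₁ d₂ := by
    intro hh
    exact hsep (cmpIn_closed (h.mem_cmp_self_W hd₁) (h.Wsub hd₂) hh)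
  have hP3' : isP3 G (U \ ({x} : Set V)) d₁ b d₂ := by
    refine ⟨⟨(h.Wsub hd₁).1, by simp [(h.mem_W_props hd₁).2.2.2.2]⟩,
      ⟨h.hbU, by simp [h.hbx]⟩,
      ⟨(h.Wsub hd₂).1, by simp [(h.mem_W_props hd₂).2.2.2.2]⟩,
      e₁.symm, e₂, hnadj, hne⟩
  have hcard2 : 2 ≤ (Wv G U x a b c).ncard := by
    have hsub : ({d₁, d₂} : Set V) ⊆ Wv G U x a b c := by
      rintro y (rfl | rfl); exacts [hd₁, hd₂]
    have := Set.ncard_le_ncard hsub (Set.toFinite _)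
    rwa [Set.ncard_pair hne] at this
  refine h.kill hP3' (F := insert a ((Wv G U x a b c) \ ({d₁, d₂} : Set V))) ?_ ?_
  · have h1 := Set.ncard_insert_le a ((Wv G U x a b c) \ ({d₁, d₂} : Set V))
    have h2 : ((Wv G U x a b c) \ ({d₁, d₂} : Set V)).ncard =
        (Wv G U x a b c).ncard - 2 := by
      rw [Set.ncard_diff (by rintro y (rfl | rfl); exacts [hd₁, hd₂])]
      rw [Set.ncard_pair hne]
    omega
  · intro v hv hvF
    have hZsub : Zv G U x a b c ⊆ U \ ({d₁, b, d₂} : Set V) := by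
      refine h.Zv_sub_of ?_
      rintro t (rfl | rfl | rfl)
      exacts [Or.inr hd₁, Or.inl (by simp), Or.inr hd₂]
    obtain ⟨z₀, hz₀, hz₀c⟩ := hcZ
    have hcT' : c ∈ U \ ({d₁, b, d₂} : Set V) := by
      refine ⟨h.hcU, fun hh => ?_⟩
      rcases hh with rfl | rfl | rfl
      · exact (h.mem_W_props hd₁).2.2.2.1 rfl
      · exact h.ebc.ne rfl
      · exact (h.mem_W_props hd₂).2.2.2.1 rfl
    have hrc : Rch G (U \ ({d₁, b, d₂} : Set V)) x c :=
      (h.rch_x_of_Z hZsub hz₀).tail ⟨hZsub hz₀, hcT', hz₀c⟩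
    have hvne : v ≠ d₁ ∧ v ≠ b ∧ v ≠ d₂ := by
      have := hv.2
      simp only [Set.mem_insert_iff, Set.mem_singleton_iff] at this
      push_neg at this
      exact this
    by_cases hva : v = a
    · exact absurd (by simp [hva]) hvF
    by_cases hvc : v = c
    · subst hvc; exact hrc
    have hvS3 : v ∈ U \ ({a,b,c} : Set V) := by
      refine ⟨hv.1, ?_⟩
      simp only [Set.mem_insert_iff, Set.mem_singleton_iff]
      push_neg
      exact ⟨hva, hvne.2.1, hvc⟩
    rcases h.S3_split hvS3 with hz | hvW
    · exact h.rch_x_of_Z hZsub hz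
    · refine absurd (Set.mem_insert_iff.mpr (Or.inr ?_)) hvF
      refine ⟨hvW, ?_⟩
      simp only [Set.mem_insert_iff, Set.mem_singleton_iff]
      push_neg
      exact ⟨hvne.1, hvne.2.2⟩

/-- KL6: if `Z` attaches to `b`, and `d ∈ W` is joined to both `a` and `c`
while every other `W`-vertex is joined to `b`, contradiction. -/
theorem kill_adc (h : CoreCtx G U x a b c)
    (hbZ : ∃ z ∈ Zv G U x a b c, G.Adj z b) {d : V} (hd : d ∈ Wv G U x a b c)
    (ead : G.Adj a d) (ecd : G.Adj c d)
    (hWb : ∀ w' ∈ Wv G U x a b c, w' ≠ d → G.Adj b w') : False := by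
  have hP3' : isP3 G (U \ ({x} : Set V)) a d c := by
    refine ⟨⟨h.haU, by simp [h.hax]⟩,
      ⟨(h.Wsub hd).1, by simp [(h.mem_W_props hd).2.2.2.2]⟩,
      ⟨h.hcU, by simp [h.hcx]⟩,
      ead, ecd.symm, h.nac, h.hac⟩
  refine h.kill hP3' (F := (∅ : Set V)) ?_ ?_
  · rw [Set.ncard_empty]
    exact (Set.ncard_pos (Set.toFinite _)).mpr h.hWne
  · intro v hv _
    have hZsub : Zv G U x a b c ⊆ U \ ({a, d, c} : Set V) := by
      refine h.Zv_sub_of ?_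
      rintro t (rfl | rfl | rfl)
      exacts [Or.inl (by simp), Or.inr hd, Or.inl (by simp)]
    obtain ⟨z₀, hz₀, hz₀b⟩ := hbZ
    have hbT' : b ∈ U \ ({a, d, c} : Set V) := by
      refine ⟨h.hbU, fun hh => ?_⟩
      rcases hh with rfl | rfl | rfl
      · exact h.eab.ne rfl
      · exact (h.mem_W_props hd).2.2.1 rfl
      · exact h.ebc.ne rfl
    have hrb : Rch G (U \ ({a, d, c} : Set V)) x b :=
      (h.rch_x_of_Z hZsub hz₀).tail ⟨hZsub hz₀, hbT', hz₀b⟩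
    have hvne : v ≠ a ∧ v ≠ d ∧ v ≠ c := by
      have := hv.2
      simp only [Set.mem_insert_iff, Set.mem_singleton_iff] at this
      push_neg at this
      exact this
    by_cases hvb : v = b
    · subst hvb; exact hrb
    have hvS3 : v ∈ U \ ({a,b,c} : Set V) := by
      refine ⟨hv.1, ?_⟩
      simp only [Set.mem_insert_iff, Set.mem_singleton_iff]
      push_neg
      exact ⟨hvne.1, hvb, hvne.2.2⟩
    rcases h.S3_split hvS3 with hz | hvW
    · exact h.rch_x_of_Z hZsub hz
    · refine hrb.tail ⟨hbT', ⟨hv.1, hv.2⟩, hWb v hvW hvne.2.1⟩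

end CoreCtx
end CoreKills4

section CoreII3

variable {V : Type*} [Fintype V]
variable {G : SimpleGraph V} {U : Set V} {x a b c : V}

namespace CoreCtx

/-- All far components touching `b`, `Z` attached to `b` and `c`: contradiction. -/
theorem caseII3 (h : CoreCtx G U x a b c)
    (hbZ : ∃ z ∈ Zv G U x a b c, G.Adj z b)
    (hcZ : ∃ z ∈ Zv G U x a b c, G.Adj z c)
    (hallb : ∀ w ∈ Wv G U x a b c, ∃ d ∈ cmpIn G (U \ ({a,b,c} : Set V)) w, G.Adj d b) :
    False := by
  -- every W-vertex is adjacent to b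
  have hWb : ∀ w ∈ Wv G U x a b c, G.Adj b w := by
    intro w hw
    by_contra hnwb
    obtain ⟨d₀, hd₀, hd₀b⟩ := hallb w hw
    exact h.full_b_of_touch hcZ hw hd₀ (h.mem_cmp_self_W hw) hd₀b
      (fun hh => hnwb hh.symm)
  -- every W-vertex is adjacent to a
  have hWa : ∀ w ∈ Wv G U x a b c, G.Adj a w := by
    intro w hw
    by_contra hnwa
    exact h.kill_abd hcZ hw (hWb w hw) hnwa
  -- no W-vertex is adjacent to c
  have hWnc : ∀ d ∈ Wv G U x a b c, ¬ G.Adj c d := by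
    intro d hd hcd
    exact h.kill_adc hbZ hd (hWa d hd) hcd (fun w' hw' _ => hWb w' hw')
  by_cases haZ : ∃ z ∈ Zv G U x a b c, G.Adj z a
  · -- use the swapped context: the pair (c, b, a)
    obtain ⟨d, hd⟩ := h.hWne
    have hd' : d ∈ Wv G U x c b a := by rw [Wv_swap]; exact hd
    have haZ' : ∃ z ∈ Zv G U x c b a, G.Adj z a := by rw [Zv_swap]; exact haZ
    exact (h.swap).kill_abd haZ' hd' (hWb d hd) (fun hh => hWnc d hd hh)
  · -- a is only attached to b and W; U \ {b} is disconnected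
    push_neg at haZ
    have hA_sub : insert a (Wv G U x a b c) ⊆ U \ ({b} : Set V) := by
      rintro y (rfl | hy)
      · exact ⟨h.haU, by simp [h.eab.ne]⟩
      · exact ⟨(h.Wsub hy).1, by simp [(h.mem_W_props hy).2.2.1]⟩
    have hA_cl : ∀ w ∈ insert a (Wv G U x a b c), ∀ w' ∈ U \ ({b} : Set V),
        G.Adj w w' → w' ∈ insert a (Wv G U x a b c) := by
      intro w hwmem w' hw' hadj
      rcases Set.mem_insert_iff.mp hwmem with hwa | hwW
      · rw [hwa] at hadj
        -- w = a
        by_cases hw'c : w' = c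
        · subst hw'c; exact absurd hadj h.nac
        · by_cases hw'a : w' = a
          · subst hw'a; simp
          · have hw'S3 : w' ∈ U \ ({a,b,c} : Set V) := by
              refine ⟨hw'.1, ?_⟩
              simp only [Set.mem_insert_iff, Set.mem_singleton_iff]
              push_neg
              refine ⟨hw'a, ?_, hw'c⟩
              intro hh; exact hw'.2 (by simp [hh])
            rcases h.S3_split hw'S3 with hz | hwW'
            · exact absurd hadj.symm (haZ w' hz)
            · exact Set.mem_insert_iff.mpr (Or.inr hwW')
      · -- w ∈ W
        by_cases hw'c : w' = c
        · subst hw'c; exact absurd hadj.symm (hWnc w hwW)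
        · by_cases hw'a : w' = a
          · subst hw'a; simp
          · have hw'S3 : w' ∈ U \ ({a,b,c} : Set V) := by
              refine ⟨hw'.1, ?_⟩
              simp only [Set.mem_insert_iff, Set.mem_singleton_iff]
              push_neg
              refine ⟨hw'a, ?_, hw'c⟩
              intro hh; exact hw'.2 (by simp [hh])
            rcases h.S3_split hw'S3 with hz | hwW'
            · exact absurd (cmpIn_closed hz (h.Wsub hwW) hadj.symm)
                (fun hh => (hwW.2 : w ∉ Zv G U x a b c) hh)
            · exact Set.mem_insert_iff.mpr (Or.inr hwW')
    have hxnA : x ∉ insert a (Wv G U x a b c) := by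
      rintro (rfl | hh)
      · exact h.hax rfl
      · exact h.x_notin_W hh
    have hxb : x ≠ b := fun hh => h.hbx hh.symm
    exact not_conn_of_closed hA_sub ⟨a, by simp⟩ hA_cl
      ⟨h.hx, by simpa using hxb⟩ hxnA
      (h.h2c b h.hbU)

end CoreCtx
end CoreII3

section CoreEnd

variable {V : Type*} [Fintype V]
variable {G : SimpleGraph V} {U : Set V} {x a b c : V}

theorem cmpInSwap (G : SimpleGraph V) (U : Set V) (a b c w : V) :
    cmpIn G (U \ ({c,b,a} : Set V)) w = cmpIn G (U \ ({a,b,c} : Set V)) w := by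
  rw [tripleSwap]

namespace CoreCtx

/-- Vertices of far components not attached to `b` are joined to `c` as well. -/
theorem full_c_of_not_b (h : CoreCtx G U x a b c) {w : V} (hw : w ∈ Wv G U x a b c)
    (hnb : ∀ d ∈ cmpIn G (U \ ({a,b,c} : Set V)) w, ¬ G.Adj d b)
    {ds : V} (hds : ds ∈ cmpIn G (U \ ({a,b,c} : Set V)) w) : G.Adj ds c := by
  have hw' : w ∈ Wv G U x c b a := by rw [Wv_swap]; exact hw
  have hnb' : ∀ d ∈ cmpIn G (U \ ({c,b,a} : Set V)) w, ¬ G.Adj d b := by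
    rw [cmpInSwap]; exact hnb
  have hds' : ds ∈ cmpIn G (U \ ({c,b,a} : Set V)) w := by
    rw [cmpInSwap]; exact hds
  exact (h.swap).full_a_of_not_b hw' hnb' hds'

/-- Non-`b` far components are good for the pair `(a, c)`. -/
theorem nonb_comp_good (h : CoreCtx G U x a b c) {w : V} (hw : w ∈ Wv G U x a b c)
    (hnb : ∀ d ∈ cmpIn G (U \ ({a,b,c} : Set V)) w, ¬ G.Adj d b) :
    G.IsClique (cmpIn G (U \ ({a,b,c} : Set V)) w ∪ {a}) ∧
    G.IsClique (cmpIn G (U \ ({a,b,c} : Set V)) w ∪ {c}) := by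
  constructor
  · intro u hu v hv hne
    rcases hu with hu | hu
    · rcases hv with hv | hv
      · exact h.comp_clique hw hu hv hne
      · rw [Set.mem_singleton_iff] at hv; subst hv
        exact h.full_a_of_not_b hw hnb hu
    · rw [Set.mem_singleton_iff] at hu; subst hu
      rcases hv with hv | hv
      · exact (h.full_a_of_not_b hw hnb hv).symm
      · rw [Set.mem_singleton_iff] at hv; exact absurd hv.symm hne
  · intro u hu v hv hne
    rcases hu with hu | hu
    · rcases hv with hv | hv
      · exact h.comp_clique hw hu hv hne
      · rw [Set.mem_singleton_iff] at hv; subst hv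
        exact h.full_c_of_not_b hw hnb hu
    · rw [Set.mem_singleton_iff] at hu; subst hu
      rcases hv with hv | hv
      · exact (h.full_c_of_not_b hw hnb hv).symm
      · rw [Set.mem_singleton_iff] at hv; exact absurd hv.symm hne

/-- A non-`b` far component is closed in `U \ {a,c}`. -/
theorem nonb_comp_closed (h : CoreCtx G U x a b c) {w : V} (hw : w ∈ Wv G U x a b c)
    (hnb : ∀ d ∈ cmpIn G (U \ ({a,b,c} : Set V)) w, ¬ G.Adj d b) :
    ∀ d ∈ cmpIn G (U \ ({a,b,c} : Set V)) w, ∀ w' ∈ U \ ({a,c} : Set V),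
      G.Adj d w' → w' ∈ cmpIn G (U \ ({a,b,c} : Set V)) w := by
  intro d hd w' hw' hadj
  by_cases hw'b : w' = b
  · subst hw'b; exact absurd hadj (hnb d hd)
  · refine cmpIn_closed hd ⟨hw'.1, ?_⟩ hadj
    intro hh
    rcases hh with rfl | rfl | rfl
    · exact hw'.2 (by simp)
    · exact hw'b rfl
    · exact hw'.2 (by simp)

theorem S3_sub_U' (h : CoreCtx G U x a b c) :
    U \ ({a,b,c} : Set V) ⊆ U \ ({a,c} : Set V) := by
  intro y hy
  refine ⟨hy.1, fun hh => hy.2 ?_⟩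
  rcases hh with rfl | rfl
  · simp
  · simp

theorem b_mem_U' (h : CoreCtx G U x a b c) : b ∈ U \ ({a,c} : Set V) := by
  refine ⟨h.hbU, fun hh => ?_⟩
  rcases hh with rfl | rfl
  · exact h.eab.ne rfl
  · exact h.ebc.ne' rfl

theorem x_mem_U' (h : CoreCtx G U x a b c) : x ∈ U \ ({a,c} : Set V) :=
  h.S3_sub_U' h.hxS3

/-- Any `x`-free component of `U \ {a,c}` avoids `Z`. -/
theorem X_avoids_Z (h : CoreCtx G U x a b c) {X : Set V}
    (hX : isCompIn G (U \ ({a,c} : Set V)) X) (hxX : x ∉ X) :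
    ∀ z ∈ X, z ∉ Zv G U x a b c := by
  intro z hzX hzZ
  have hrzx : Rch G (U \ ({a,c} : Set V)) z x :=
    ((rch_cmpIn h.hxS3 hzZ).mono (fun y hy => h.S3_sub_U' (h.Zsub hy))).symm
  exact hxX (Rch.stay hX.2.2 hzX hrzx)

/-- Members of an `x`-free, `b`-free component of `U \ {a,c}` lie in `W`. -/
theorem X_sub_W (h : CoreCtx G U x a b c) {X : Set V}
    (hX : isCompIn G (U \ ({a,c} : Set V)) X) (hxX : x ∉ X) (hbX : b ∉ X) :
    X ⊆ Wv G U x a b c := by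
  intro y hyX
  have hyU' := hX.1 hyX
  have hyS3 : y ∈ U \ ({a,b,c} : Set V) := by
    refine ⟨hyU'.1, fun hh => ?_⟩
    rcases hh with rfl | rfl | rfl
    · exact hyU'.2 (by simp)
    · exact hbX hyX
    · exact hyU'.2 (by simp)
  exact ⟨hyS3, fun hh => h.X_avoids_Z hX hxX y hyX hh⟩

/-- The component of `U\{a,b,c}` of any member of a component `X` of `U\{a,c}`
is contained in `X`. -/
theorem cmp_sub_X (h : CoreCtx G U x a b c) {X : Set V}
    (hX : isCompIn G (U \ ({a,c} : Set V)) X) {y : V} (hyX : y ∈ X)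
    (hyW : y ∈ Wv G U x a b c) :
    cmpIn G (U \ ({a,b,c} : Set V)) y ⊆ X := by
  intro d hd
  exact Rch.stay hX.2.2 hyX ((rch_of_cmpIn_mem hd).mono h.S3_sub_U')

/-- An `x`-free, `b`-free component of `U \ {a,c}` equals a non-`b` far component. -/
theorem X_eq_comp (h : CoreCtx G U x a b c) {X : Set V}
    (hX : isCompIn G (U \ ({a,c} : Set V)) X) (hxX : x ∉ X) (hbX : b ∉ X) :
    ∃ y ∈ Wv G U x a b c,
      (∀ d ∈ cmpIn G (U \ ({a,b,c} : Set V)) y, ¬ G.Adj d b) ∧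
      X = cmpIn G (U \ ({a,b,c} : Set V)) y := by
  obtain ⟨y, hyX⟩ := hX.2.1.1
  have hyW : y ∈ Wv G U x a b c := h.X_sub_W hX hxX hbX hyX
  have hDyX : cmpIn G (U \ ({a,b,c} : Set V)) y ⊆ X := h.cmp_sub_X hX hyX hyW
  have hnb : ∀ d ∈ cmpIn G (U \ ({a,b,c} : Set V)) y, ¬ G.Adj d b := by
    intro d hd hdb
    exact hbX (hX.2.2 d (hDyX hd) b (h.b_mem_U') hdb)
  refine ⟨y, hyW, hnb, Set.eq_of_subset_of_subset ?_ hDyX⟩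
  intro u huX
  have : Rch G (U \ ({a,c} : Set V)) y u := (hX.2.1.2 y hyX u huX).mono hX.1
  exact Rch.stay (h.nonb_comp_closed hyW hnb) (h.mem_cmp_self_W hyW) this

end CoreCtx
end CoreEnd

section CoreC

variable {V : Type*} [Fintype V]
variable {G : SimpleGraph V} {U : Set V} {x a b c : V}

namespace CoreCtx

theorem Zv_sub_U' (h : CoreCtx G U x a b c) :
    Zv G U x a b c ⊆ U \ ({a,c} : Set V) := fun z hz => h.S3_sub_U' (h.Zsub hz)

theorem rch_U'_x_of_Z (h : CoreCtx G U x a b c) {z : V} (hz : z ∈ Zv G U x a b c) :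
    Rch G (U \ ({a,c} : Set V)) x z :=
  (rch_cmpIn h.hxS3 hz).mono (fun y hy => h.Zv_sub_U' hy)

/-- The conclusion (C) of the structural lemma, from the core context. -/
theorem caseC (h : CoreCtx G U x a b c) :
    ∃ p q : V, p ∈ U ∧ q ∈ U ∧ p ≠ x ∧ q ≠ x ∧ p ≠ q ∧ ¬ G.Adj p q ∧
      ¬ Conn G (U \ ({p,q} : Set V)) ∧
      ∀ X : Set V, isCompIn G (U \ ({p,q} : Set V)) X → x ∉ X →
        G.IsClique (X ∪ {p}) ∧ G.IsClique (X ∪ {q}) := by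
  refine ⟨a, c, h.haU, h.hcU, h.hax, h.hcx, h.hac, h.nac, ?_⟩
  by_cases hbZ : ∃ z ∈ Zv G U x a b c, G.Adj z b
  · -- Z is attached to b
    by_cases hallb : ∀ w ∈ Wv G U x a b c,
        ∃ d ∈ cmpIn G (U \ ({a,b,c} : Set V)) w, G.Adj d b
    · -- contradiction via caseII3 (possibly swapped)
      exfalso
      obtain ⟨w₁, hw₁⟩ := h.hWne
      obtain ⟨z₁, hz₁, t₁, ht₁, ht₁b, hadj₁⟩ :=
        h.att2 (isCompIn_cmpIn h.hxS3) (show b ∈ ({a,b,c} : Set V) by simp)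
          ⟨w₁, ⟨(h.Wsub hw₁).1, by simp [(h.mem_W_props hw₁).2.2.1]⟩, h.WZdisj hw₁⟩
      rcases ht₁ with rfl | rfl | rfl
      · -- Z attached to a: swap
        refine (h.swap).caseII3 ?_ ?_ ?_
        · rw [Zv_swap]; exact hbZ
        · rw [Zv_swap]; exact ⟨z₁, hz₁, hadj₁⟩
        · intro w hw
          rw [Wv_swap] at hw
          rw [cmpInSwap]
          exact hallb w hw
      · exact absurd rfl ht₁b
      · exact h.caseII3 hbZ ⟨z₁, hz₁, hadj₁⟩ hallb
    · -- some far component misses b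
      push_neg at hallb
      obtain ⟨w₀, hw₀, hnb₀⟩ := hallb
      constructor
      · -- U \ {a,c} is disconnected
        refine not_conn_of_closed
          (X := cmpIn G (U \ ({a,b,c} : Set V)) w₀)
          (fun y hy => h.S3_sub_U' (cmpIn_subset hy))
          ⟨w₀, h.mem_cmp_self_W hw₀⟩
          (h.nonb_comp_closed hw₀ hnb₀) (h.x_mem_U') (h.x_notin_cmpW hw₀)
      · intro X hX hxX
        have hbX : b ∉ X := by
          intro hbX
          obtain ⟨zb, hzb, hzbb⟩ := hbZ
          have hrxb : Rch G (U \ ({a,c} : Set V)) x b :=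
            (h.rch_U'_x_of_Z hzb).tail ⟨h.Zv_sub_U' hzb, h.b_mem_U', hzbb⟩
          exact hxX (Rch.stay hX.2.2 hbX hrxb.symm)
        obtain ⟨y, hyW, hnb, hXeq⟩ := h.X_eq_comp hX hxX hbX
        rw [hXeq]
        exact h.nonb_comp_good hyW hnb
  · -- Z is not attached to b
    push_neg at hbZ
    -- Z attaches to both a and c
    obtain ⟨w₁, hw₁⟩ := h.hWne
    obtain ⟨z₁, hz₁, t₁, ht₁, ht₁ne, hadj₁⟩ :=
      h.att2 (isCompIn_cmpIn h.hxS3) (show c ∈ ({a,b,c} : Set V) by simp)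
        ⟨w₁, ⟨(h.Wsub hw₁).1, by simp [(h.mem_W_props hw₁).2.2.2.1]⟩, h.WZdisj hw₁⟩
    have haZ : ∃ z ∈ Zv G U x a b c, G.Adj z a := by
      rcases ht₁ with rfl | rfl | rfl
      · exact ⟨z₁, hz₁, hadj₁⟩
      · exact absurd hadj₁ (hbZ z₁ hz₁)
      · exact absurd rfl ht₁ne
    obtain ⟨z₂, hz₂, t₂, ht₂, ht₂ne, hadj₂⟩ :=
      h.att2 (isCompIn_cmpIn h.hxS3) (show a ∈ ({a,b,c} : Set V) by simp)
        ⟨w₁, ⟨(h.Wsub hw₁).1, by simp [(h.mem_W_props hw₁).2.1]⟩, h.WZdisj hw₁⟩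
    have hcZ : ∃ z ∈ Zv G U x a b c, G.Adj z c := by
      rcases ht₂ with rfl | rfl | rfl
      · exact absurd rfl ht₂ne
      · exact absurd hadj₂ (hbZ z₂ hz₂)
      · exact ⟨z₂, hz₂, hadj₂⟩
    constructor
    · -- U \ {a,c} is disconnected: Z is closed and misses b
      refine not_conn_of_closed (X := Zv G U x a b c) h.Zv_sub_U' ⟨x, h.hxZ⟩
        ?_ h.b_mem_U' (fun hh => h.notS3_b (h.Zsub hh))
      intro z hz w' hw' hadj
      by_cases hw'b : w' = b
      · subst hw'b; exact absurd hadj (hbZ z hz)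
      · refine cmpIn_closed hz ⟨hw'.1, ?_⟩ hadj
        intro hh
        rcases hh with rfl | rfl | rfl
        · exact hw'.2 (by simp)
        · exact hw'b rfl
        · exact hw'.2 (by simp)
    · intro X hX hxX
      by_cases hbX : b ∈ X
      · -- the component of b: all its other members are adjacent to a, b, c
        have key : ∀ u ∈ X, u ≠ b →
            u ∈ Wv G U x a b c ∧ G.Adj u b ∧ G.Adj a u ∧ G.Adj c u := by
          intro u huX hub
          have huU' := hX.1 huX
          have huW : u ∈ Wv G U x a b c := by
            refine ⟨⟨huU'.1, fun hh => ?_⟩, fun hh => h.X_avoids_Z hX hxX u huX hh⟩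
            rcases hh with rfl | rfl | rfl
            · exact huU'.2 (by simp)
            · exact hub rfl
            · exact huU'.2 (by simp)
          have hDuX : cmpIn G (U \ ({a,b,c} : Set V)) u ⊆ X := h.cmp_sub_X hX huX huW
          -- Du is b-attached
          have hbatt : ∃ d₀ ∈ cmpIn G (U \ ({a,b,c} : Set V)) u, G.Adj d₀ b := by
            by_contra hnb
            push_neg at hnb
            have hrub : Rch G (U \ ({a,c} : Set V)) u b :=
              (hX.2.1.2 u huX b hbX).mono hX.1
            have : b ∈ cmpIn G (U \ ({a,b,c} : Set V)) u :=
              Rch.stay (h.nonb_comp_closed huW hnb) (h.mem_cmp_self_W huW) hrub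
            exact h.notS3_b (cmpIn_subset this)
          obtain ⟨d₀, hd₀, hd₀b⟩ := hbatt
          have hub' : G.Adj u b := by
            by_contra hnub
            exact h.full_b_of_touch hcZ huW hd₀ (h.mem_cmp_self_W huW) hd₀b hnub
          have hau : G.Adj a u := by
            by_contra hnau
            exact h.kill_abd hcZ huW hub'.symm hnau
          have hcu : G.Adj c u := by
            by_contra hncu
            have huW' : u ∈ Wv G U x c b a := by rw [Wv_swap]; exact huW
            have haZ' : ∃ z ∈ Zv G U x c b a, G.Adj z a := by rw [Zv_swap]; exact haZ
            exact (h.swap).kill_abd haZ' huW' hub'.symm hncu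
          exact ⟨huW, hub', hau, hcu⟩
        have hpair : ∀ u ∈ X, ∀ v ∈ X, u ≠ b → v ≠ b → u ≠ v → G.Adj u v := by
          intro u huX v hvX hub hvb huv
          obtain ⟨huW, hub', -, -⟩ := key u huX hub
          obtain ⟨hvW, hvb', -, -⟩ := key v hvX hvb
          have hsame : v ∈ cmpIn G (U \ ({a,b,c} : Set V)) u := by
            by_contra hsep
            exact h.not_two_b_comps hcZ huW hvW hsep hub'.symm hvb'.symm
          exact h.comp_clique huW (h.mem_cmp_self_W huW) hsame huv
        constructor
        · intro u hu v hv hne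
          rcases hu with hu | hu
          · rcases hv with hv | hv
            · by_cases hub : u = b
              · rw [hub]
                by_cases hvb : v = b
                · exact absurd (hub.trans hvb.symm) hne
                · exact ((key v hv hvb).2.1).symm
              · by_cases hvb : v = b
                · rw [hvb]; exact (key u hu hub).2.1
                · exact hpair u hu v hv hub hvb hne
            · rw [Set.mem_singleton_iff] at hv; subst hv
              by_cases hub : u = b
              · rw [hub]; exact h.eab.symm
              · exact ((key u hu hub).2.2.1).symm
          · rw [Set.mem_singleton_iff] at hu; subst hu
            rcases hv with hv | hv
            · by_cases hvb : v = b
              · rw [hvb]; exact h.eab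
              · exact (key v hv hvb).2.2.1
            · rw [Set.mem_singleton_iff] at hv; exact absurd hv.symm hne
        · intro u hu v hv hne
          rcases hu with hu | hu
          · rcases hv with hv | hv
            · by_cases hub : u = b
              · rw [hub]
                by_cases hvb : v = b
                · exact absurd (hub.trans hvb.symm) hne
                · exact ((key v hv hvb).2.1).symm
              · by_cases hvb : v = b
                · rw [hvb]; exact (key u hu hub).2.1
                · exact hpair u hu v hv hub hvb hne
            · rw [Set.mem_singleton_iff] at hv; subst hv
              by_cases hub : u = b
              · rw [hub]; exact h.ebc
              · exact ((key u hu hub).2.2.2).symm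
          · rw [Set.mem_singleton_iff] at hu; subst hu
            rcases hv with hv | hv
            · by_cases hvb : v = b
              · rw [hvb]; exact h.ebc.symm
              · exact (key v hv hvb).2.2.2
            · rw [Set.mem_singleton_iff] at hv; exact absurd hv.symm hne
      · obtain ⟨y, hyW, hnb, hXeq⟩ := h.X_eq_comp hX hxX hbX
        rw [hXeq]
        exact h.nonb_comp_good hyW hnb

end CoreCtx
end CoreC

section MainInd

variable {V : Type*} [Fintype V]

/-- The marked-vertex strengthening of the structural lemma. -/
def MainStmt (G : SimpleGraph V) (U : Set V) (x : V) : Prop :=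
  (∃ u ∈ U, ∃ X : Set V, isCompIn G (U \ ({u} : Set V)) X ∧ G.IsClique X ∧ x ∉ X) ∨
  (∃ p q r : V, isP3 G (U \ ({x} : Set V)) p q r ∧ Conn G (U \ ({p,q,r} : Set V))) ∨
  (∃ p q : V, p ∈ U ∧ q ∈ U ∧ p ≠ x ∧ q ≠ x ∧ p ≠ q ∧ ¬ G.Adj p q ∧
    ¬ Conn G (U \ ({p,q} : Set V)) ∧
    ∀ X : Set V, isCompIn G (U \ ({p,q} : Set V)) X → x ∉ X →
      G.IsClique (X ∪ {p}) ∧ G.IsClique (X ∪ {q}))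

variable {G : SimpleGraph V} {U : Set V} {x : V}

theorem core_case2 (hU : Conn G U) (hx : x ∈ U)
    (h2c : ∀ u ∈ U, Conn G (U \ ({u} : Set V))) : MainStmt G U x := by
  by_cases hK : G.IsClique (U \ ({x} : Set V))
  · refine Or.inl ⟨x, hx, U \ ({x} : Set V), ⟨le_refl _, h2c x hx, ?_⟩, hK, by simp⟩
    exact fun w _ w' hw' _ => hw'
  · by_cases hB : ∃ p q r : V, isP3 G (U \ ({x} : Set V)) p q r ∧
        Conn G (U \ ({p,q,r} : Set V))
    · exact Or.inr (Or.inl hB)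
    · have hnB : ∀ p q r : V, isP3 G (U \ ({x} : Set V)) p q r →
          ¬ Conn G (U \ ({p,q,r} : Set V)) := by
        intro p q r hP hc
        exact hB ⟨p, q, r, hP, hc⟩
      have hex : ∃ t : V × V × V, isP3 G (U \ ({x} : Set V)) t.1 t.2.1 t.2.2 := by
        obtain ⟨p, hp, q, hq, r, hr, e1, e2, e3, e4⟩ :=
          exists_induced_P3 (h2c x hx) hK
        exact ⟨⟨p, q, r⟩, ⟨hp, hq, hr, e1, e2, e3, e4⟩⟩
      set N : Set ℕ := {n : ℕ | ∃ t : V × V × V,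
          isP3 G (U \ ({x} : Set V)) t.1 t.2.1 t.2.2 ∧
          n = ((U \ ({t.1, t.2.1, t.2.2} : Set V)) \
            cmpIn G (U \ ({t.1, t.2.1, t.2.2} : Set V)) x).ncard} with hNdef
      have hNne : N.Nonempty := by
        obtain ⟨t, ht⟩ := hex
        exact ⟨_, t, ht, rfl⟩
      obtain ⟨⟨a, b, c⟩, ht₀, hn₀⟩ := Nat.sInf_mem hNne
      have hctx : CoreCtx G U x a b c := by
        refine ⟨hU, hx, h2c, hnB, ht₀, ?_⟩
        intro p q r hP'
        have hmemN : ((U \ ({p,q,r} : Set V)) \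
            cmpIn G (U \ ({p,q,r} : Set V)) x).ncard ∈ N := ⟨⟨p, q, r⟩, hP', rfl⟩
        have hle := Nat.sInf_le hmemN
        have heq : Wv G U x a b c = (U \ ({a,b,c} : Set V)) \
            cmpIn G (U \ ({a,b,c} : Set V)) x := rfl
        rw [heq, ← hn₀]
        exact hle
      exact Or.inr (Or.inr hctx.caseC)

theorem main_aux : ∀ (n : ℕ) (U : Set V) (x : V), U.ncard ≤ n → Conn G U → x ∈ U →
    2 ≤ U.ncard → MainStmt G U x := by
  intro n
  induction n with
  | zero => intro U x hle _ _ h2; omega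
  | succ n ih =>
    intro U x hle hU hx h2
    by_cases h2c : ∀ u ∈ U, Conn G (U \ ({u} : Set V))
    · exact core_case2 hU hx h2c
    · push_neg at h2c
      obtain ⟨c₀, hc₀U, hncon⟩ := h2c
      have hne : (U \ ({c₀} : Set V)).Nonempty := by
        obtain ⟨p, hp, q, hq, hpq⟩ := (Set.one_lt_ncard (Set.toFinite U)).mp (by omega)
        by_cases hpc : p = c₀
        · refine ⟨q, hq, ?_⟩
          subst hpc
          simpa using fun hh => hpq hh.symm
        · exact ⟨p, hp, by simpa using hpc⟩
      have hsep : ∃ u₀ ∈ U \ ({c₀} : Set V), ∃ v₀ ∈ U \ ({c₀} : Set V),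
          ¬ Rch G (U \ ({c₀} : Set V)) u₀ v₀ := by
        by_contra hcon
        push_neg at hcon
        exact hncon ⟨hne, hcon⟩
      obtain ⟨u₀, hu₀, v₀, hv₀, huv⟩ := hsep
      -- choose y whose component avoids x, plus a vertex y' outside the component
      obtain ⟨y, hyU, hxY, y', hy'U, hy'Y⟩ :
          ∃ y ∈ U \ ({c₀} : Set V), x ∉ cmpIn G (U \ ({c₀} : Set V)) y ∧
          ∃ y' ∈ U \ ({c₀} : Set V), y' ∉ cmpIn G (U \ ({c₀} : Set V)) y := by
        by_cases hxc : x = c₀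
        · refine ⟨u₀, hu₀, ?_, v₀, hv₀, ?_⟩
          · intro hh
            exact (cmpIn_subset hh).2 (by simp [hxc])
          · intro hh
            exact huv hh.2
        · have hxU' : x ∈ U \ ({c₀} : Set V) := ⟨hx, by simpa using hxc⟩
          by_cases hru : Rch G (U \ ({c₀} : Set V)) x u₀
          · refine ⟨v₀, hv₀, ?_, x, hxU', ?_⟩
            · intro hh
              exact huv (Relation.ReflTransGen.trans (Rch.symm hru) (Rch.symm hh.2))
            · intro hh
              exact huv (Relation.ReflTransGen.trans (Rch.symm hru) (Rch.symm hh.2))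
          · refine ⟨u₀, hu₀, ?_, x, hxU', ?_⟩
            · intro hh
              exact hru (Rch.symm hh.2)
            · intro hh
              exact hru (Rch.symm hh.2)
      set Y : Set V := cmpIn G (U \ ({c₀} : Set V)) y with hYdef
      set B : Set V := insert c₀ Y with hBdef
      have hYU' : Y ⊆ U \ ({c₀} : Set V) := cmpIn_subset
      have hYconn : Conn G Y := conn_cmpIn hyU
      have hc₀Y : c₀ ∉ Y := fun hh => (hYU' hh).2 rfl
      have hBU : B ⊆ U := by
        rintro z (rfl | hz)
        · exact hc₀U
        · exact (hYU' hz).1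
      -- F1 : neighbours of Y lie in B
      have hF1 : ∀ w ∈ Y, ∀ w' ∈ U, G.Adj w w' → w' ∈ B := by
        intro w hw w' hw' hadj
        by_cases hw'c : w' = c₀
        · exact Or.inl hw'c
        · exact Or.inr (cmpIn_closed hw ⟨hw', by simpa using hw'c⟩ hadj)
      -- Y is attached to c₀
      have hattc : ∃ w ∈ Y, G.Adj w c₀ := by
        obtain ⟨w, hw, z, hzU, hzY, hadj⟩ :=
          exists_exit (hU.2 y hyU.1 y' hy'U.1) (mem_cmpIn_self hyU) hy'Y
        rcases hF1 w hw z hzU hadj with rfl | hzY'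
        · exact ⟨w, hw, hadj⟩
        · exact absurd hzY' hzY
      have hBconn : Conn G B := by
        obtain ⟨w, hw, hadj⟩ := hattc
        have := conn_union hYconn (conn_singleton (G := G) (y := c₀)) hw rfl (Or.inl hadj)
        rwa [Set.union_singleton] at this
      have hyB : y ∈ B := Or.inr (mem_cmpIn_self hyU)
      have hc₀B : c₀ ∈ B := Or.inl rfl
      have hyc₀ : y ≠ c₀ := fun hh => hyU.2 (by simp [hh])
      have hB2 : 2 ≤ B.ncard := by
        have hs : ({y, c₀} : Set V) ⊆ B := by
          rintro z (rfl | rfl)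
          exacts [hyB, hc₀B]
        have := Set.ncard_le_ncard hs (Set.toFinite B)
        rwa [Set.ncard_pair hyc₀] at this
      have hy'B : y' ∉ B := by
        rintro (rfl | hh)
        · exact hy'U.2 rfl
        · exact hy'Y hh
      have hBlt : B.ncard < U.ncard :=
        Set.ncard_lt_ncard ⟨hBU, fun hsub => hy'B (hsub hy'U.1)⟩ (Set.toFinite U)
      have hUYr : ∀ z ∈ U \ Y, Rch G (U \ Y) z c₀ := by
        intro z hz
        by_cases hzc : z = c₀
        · subst hzc; exact Relation.ReflTransGen.refl
        · obtain ⟨w, hw, hrw, t, ht, hadj⟩ :=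
            exists_prefix (hU.2 z hz.1 y hyU.1) hz.2 (mem_cmpIn_self hyU)
          rcases hF1 t ht w hw.1 hadj.symm with rfl | hwY
          · exact hrw
          · exact absurd hwY hw.2
      have hxUY : x ∈ U \ Y := ⟨hx, hxY⟩
      have hUYconn : Conn G (U \ Y) := by
        refine ⟨⟨c₀, hc₀U, hc₀Y⟩, fun p hp q hq => ?_⟩
        exact (hUYr p hp).trans (hUYr q hq).symm
      have hMS := ih B c₀ (by omega) hBconn hc₀B hB2
      rcases hMS with ⟨u, huB, X, hXcomp, hXcl, hcX⟩ |
        ⟨p, q, r, hP3B, hconnB⟩ |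
        ⟨p, q, hpB, hqB, hpc, hqc, hpq, hnadj, hncon2, hgood⟩
      · -- lift (A)
        have hXY : X ⊆ Y := by
          intro z hz
          rcases (hXcomp.1 hz).1 with rfl | hzY
          · exact absurd hz hcX
          · exact hzY
        refine Or.inl ⟨u, hBU huB, X, ⟨?_, hXcomp.2.1, ?_⟩, hXcl,
          fun hh => hxY (hXY hh)⟩
        · exact fun z hz => ⟨hBU (hXcomp.1 hz).1, (hXcomp.1 hz).2⟩
        · intro w hw w' hw' hadj
          have hw'B : w' ∈ B := hF1 w (hXY hw) w' hw'.1 hadj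
          exact hXcomp.2.2 w hw w' ⟨hw'B, hw'.2⟩ hadj
      · -- lift (B)
        have hmemY : ∀ s : V, s ∈ B \ ({c₀} : Set V) → s ∈ Y := by
          intro s hs
          rcases hs.1 with hsc | hsY
          · exact absurd hsc (by simpa using hs.2)
          · exact hsY
        have hpY := hmemY p hP3B.1
        have hqY := hmemY q hP3B.2.1
        have hrY := hmemY r hP3B.2.2.1
        have hTY : ({p, q, r} : Set V) ⊆ Y := by
          rintro s (rfl | rfl | rfl)
          exacts [hpY, hqY, hrY]
        have hnex : ∀ s : V, s ∈ Y → s ≠ x := by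
          intro s hs hh
          exact hxY (hh ▸ hs)
        refine Or.inr (Or.inl ⟨p, q, r, ⟨⟨(hYU' hpY).1, by simpa using hnex p hpY⟩,
          ⟨(hYU' hqY).1, by simpa using hnex q hqY⟩,
          ⟨(hYU' hrY).1, by simpa using hnex r hrY⟩,
          hP3B.2.2.2.1, hP3B.2.2.2.2.1, hP3B.2.2.2.2.2.1, hP3B.2.2.2.2.2.2⟩, ?_⟩)
        have hsplit : U \ ({p,q,r} : Set V) = (B \ ({p,q,r} : Set V)) ∪ (U \ Y) := by
          ext z
          constructor
          · rintro ⟨hzU, hzT⟩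
            by_cases hzY : z ∈ Y
            · exact Or.inl ⟨Or.inr hzY, hzT⟩
            · exact Or.inr ⟨hzU, hzY⟩
          · rintro (⟨hzB, hzT⟩ | ⟨hzU, hzY⟩)
            · exact ⟨hBU hzB, hzT⟩
            · exact ⟨hzU, fun hh => hzY (hTY hh)⟩
        rw [hsplit]
        exact conn_union hconnB hUYconn ⟨hc₀B, fun hh => hc₀Y (hTY hh)⟩
          ⟨hc₀U, hc₀Y⟩ (Or.inr rfl)
      · -- lift (C)
        have hmemY : ∀ s : V, s ∈ B → s ≠ c₀ → s ∈ Y := by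
          intro s hs hsc
          rcases hs with hsc' | hsY
          · exact absurd hsc' hsc
          · exact hsY
        have hpY := hmemY p hpB hpc
        have hqY := hmemY q hqB hqc
        have hnex : ∀ s : V, s ∈ Y → s ≠ x := fun s hs hh => hxY (hh ▸ hs)
        have hxpq : x ∈ U \ ({p,q} : Set V) := by
          refine ⟨hx, fun hh => ?_⟩
          rcases hh with rfl | rfl
          · exact hnex x hpY rfl
          · exact hnex x hqY rfl
        have hc₀pq : c₀ ∈ B \ ({p,q} : Set V) := by
          refine ⟨hc₀B, fun hh => ?_⟩
          rcases hh with rfl | rfl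
          · exact hc₀Y hpY
          · exact hc₀Y hqY
        -- find a component of B \ {p,q} avoiding c₀
        obtain ⟨w₁, hw₁, hw₁c⟩ : ∃ w₁ ∈ B \ ({p,q} : Set V),
            ¬ Rch G (B \ ({p,q} : Set V)) w₁ c₀ := by
          by_contra hcon
          push_neg at hcon
          refine hncon2 ⟨⟨c₀, hc₀pq⟩, fun s hs t ht => ?_⟩
          exact (hcon s hs).trans (hcon t ht).symm
        have hX₁Y : cmpIn G (B \ ({p,q} : Set V)) w₁ ⊆ Y := by
          intro z hz
          rcases (cmpIn_subset hz).1 with rfl | hzY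
          · exact absurd hz.2 hw₁c
          · exact hzY
        have hX₁U : cmpIn G (B \ ({p,q} : Set V)) w₁ ⊆ U \ ({p,q} : Set V) :=
          fun z hz => ⟨hBU (cmpIn_subset hz).1, (cmpIn_subset hz).2⟩
        have hX₁cl : ∀ w ∈ cmpIn G (B \ ({p,q} : Set V)) w₁,
            ∀ w' ∈ U \ ({p,q} : Set V), G.Adj w w' →
            w' ∈ cmpIn G (B \ ({p,q} : Set V)) w₁ := by
          intro w hw w' hw' hadj
          have hw'B : w' ∈ B := hF1 w (hX₁Y hw) w' hw'.1 hadj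
          exact cmpIn_closed hw ⟨hw'B, hw'.2⟩ hadj
        refine Or.inr (Or.inr ⟨p, q, (hYU' hpY).1, (hYU' hqY).1, hnex p hpY,
          hnex q hqY, hpq, hnadj, ?_, ?_⟩)
        · exact not_conn_of_closed hX₁U ⟨w₁, mem_cmpIn_self hw₁⟩ hX₁cl hxpq
            (fun hh => hxY (hX₁Y hh))
        · intro X hX hxX
          have hXY : X ⊆ Y := by
            by_contra hcon
            rw [Set.not_subset] at hcon
            obtain ⟨v, hvX, hvY⟩ := hcon
            have hvUY : v ∈ U \ Y := ⟨(hX.1 hvX).1, hvY⟩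
            have hUYsub : U \ Y ⊆ U \ ({p,q} : Set V) := by
              intro z hz
              refine ⟨hz.1, fun hh => ?_⟩
              rcases hh with rfl | rfl
              · exact hz.2 hpY
              · exact hz.2 hqY
            have hrall : Rch G (U \ ({p,q} : Set V)) v x :=
              Rch.mono hUYsub (Relation.ReflTransGen.trans (hUYr v hvUY) (Rch.symm (hUYr x hxUY)))
            exact hxX (Rch.stay hX.2.2 hvX hrall)
          have hXB : isCompIn G (B \ ({p,q} : Set V)) X := by
            refine ⟨fun z hz => ⟨Or.inr (hXY hz), (hX.1 hz).2⟩, hX.2.1, ?_⟩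
            intro w hw w' hw' hadj
            exact hX.2.2 w hw w' ⟨hBU hw'.1, hw'.2⟩ hadj
          exact hgood X hXB (fun hh => hc₀Y (hXY hh))

end MainInd

/-- structural lemma. For any connected simple graph `Q` with at
least two vertices, at least one of the following holds:
(A) some connected component of `Q − v` is a clique, for some vertex `v`;
(B) there are distinct vertices `a, b, c` inducing a path `P₃` (exactly the edges
`ab`, `bc`) such that `Q − {a,b,c}` is connected;
(C) there are nonadjacent vertices `v, b` such that `Q − {v,b}` is disconnected and
all connected components `X` of `Q − {v,b}`, except possibly one, are such that both
`Q[X ∪ {v}]` and `Q[X ∪ {b}]` are cliques. -/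
theorem stmt8 {V : Type*} [Fintype V] (Q : SimpleGraph V) (hconn : Q.Connected)
    (hcard : 2 ≤ Fintype.card V) :
    (∃ (v : V) (X : Set V), IsCompOf Q {v} X ∧ Q.IsClique X) ∨
    (∃ a b c : V, a ≠ b ∧ b ≠ c ∧ a ≠ c ∧
      Q.Adj a b ∧ Q.Adj b c ∧ ¬ Q.Adj a c ∧
      (Q.induce ({a, b, c}ᶜ : Set V)).Connected) ∨
    (∃ v b : V, v ≠ b ∧ ¬ Q.Adj v b ∧
      ¬ (Q.induce ({v, b}ᶜ : Set V)).Connected ∧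
      ∃ X₀ : Set V, ∀ X : Set V, IsCompOf Q {v, b} X → X ≠ X₀ →
        Q.IsClique (X ∪ {v}) ∧ Q.IsClique (X ∪ {b})) := by
  classical
  have hne : Nonempty V := by
    have : 0 < Fintype.card V := lt_of_lt_of_le (by norm_num) hcard
    exact Fintype.card_pos_iff.mp this
  obtain ⟨x⟩ := hne
  have hu2 : 2 ≤ (Set.univ : Set V).ncard := by
    rw [Set.ncard_univ, Nat.card_eq_fintype_card]
    exact hcard
  have hMS : MainStmt Q (Set.univ : Set V) x :=
    main_aux (Set.univ : Set V).ncard (Set.univ) x (le_refl _)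
      (conn_univ_of_connected hconn) trivial hu2
  rcases hMS with ⟨u, -, X, hcomp, hclq, -⟩ | ⟨p, q, r, hP3, hconn'⟩ |
    ⟨p, q, -, -, -, -, hpq, hnadj, hncon, hgood⟩
  · refine Or.inl ⟨u, X, ⟨?_, ?_, ?_⟩, hclq⟩
    · rw [Set.disjoint_singleton_right]
      intro hu
      exact (hcomp.1 hu).2 rfl
    · exact conn_iff_induce.mp hcomp.2.1
    · intro z hz y hadj hyS
      exact hcomp.2.2 z hz y ⟨trivial, hyS⟩ hadj
  · obtain ⟨-, -, -, e1, e2, e3, e4⟩ := hP3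
    refine Or.inr (Or.inl ⟨p, q, r, e1.ne, e2.ne, e4, e1, e2, e3, ?_⟩)
    rw [Set.compl_eq_univ_diff]
    exact conn_iff_induce.mp hconn'
  · refine Or.inr (Or.inr ⟨p, q, hpq, hnadj, ?_,
      cmpIn Q (Set.univ \ ({p,q} : Set V)) x, ?_⟩)
    · rw [Set.compl_eq_univ_diff]
      intro hcon
      exact hncon (conn_iff_induce.mpr hcon)
    · intro X hX hXne
      have hXcomp : isCompIn Q (Set.univ \ ({p,q} : Set V)) X := by
        refine ⟨fun z hz => ⟨trivial, Set.disjoint_left.mp hX.1 hz⟩,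
          conn_iff_induce.mpr hX.2.1, ?_⟩
        intro w hw w' hw' hadj
        exact hX.2.2 w hw w' hadj hw'.2
      have hxX : x ∉ X := by
        intro hxX
        exact hXne (hXcomp.eq_cmpIn hxX)
      exact hgood X hXcomp hxX
end

section
/- Let G be a connected signed graph and let a, b, c be distinct vertices forming a positive triangle (the three edges ab, bc, ca exist and carry an even number of negative signs) such that G−{a,b,c} is connected and nonempty. Then β(G) − pt(G) ≥ β(G−{a,b,c}) − pt(G−{a,b,c}) + 3/4. -/
private lemma sym2_cases {V : Type*} (e : Sym2 V) : ∃ u v, e = s(u, v) := by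
  induction e using Sym2.inductionOn with | _ u v => exact ⟨u, v, rfl⟩

private lemma signConsistent_pair {V : Type*} (sign : Sym2 V → Bool) (A : Set V) (x y : V) :
    SignConsistent sign A s(x, y) ↔ (sign s(x, y) = true ↔ (x ∈ A ↔ y ∈ A)) := by
  constructor
  · intro h; exact h x y rfl
  · intro h u v huv
    rw [huv] at h ⊢
    rcases Sym2.eq_iff.mp huv with ⟨rfl, rfl⟩ | ⟨rfl, rfl⟩
    · exact h
    · tauto

private lemma cross_flip {S P P' R R' : Prop} (hP : P' ↔ ¬P) (hR : R ↔ R')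
    (h : ¬(S ↔ (P ↔ R))) : S ↔ (P' ↔ R') := by tauto

private lemma card_cc_eq_one {W : Type*} {G : SimpleGraph W} (h : G.Connected) :
    Nat.card G.ConnectedComponent = 1 := by
  refine Nat.card_eq_one_iff_unique.mpr ⟨⟨fun x y => ?_⟩,
    ⟨G.connectedComponentMk h.nonempty.some⟩⟩
  obtain ⟨u, rfl⟩ := x.exists_rep
  obtain ⟨v, rfl⟩ := y.exists_rep
  exact SimpleGraph.ConnectedComponent.sound (h.preconnected u v)

private lemma bddAbove_beta {V : Type*} [Fintype V] (G : SimpleGraph V) (sign : Sym2 V → Bool) :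
    BddAbove {n | ∃ A : Set V, n = balCount G sign A} := by
  refine ⟨G.edgeSet.ncard, fun n hn => ?_⟩
  obtain ⟨A, rfl⟩ := hn
  exact Set.ncard_le_ncard (fun e he => he.1) (Set.toFinite _)

private lemma le_beta {V : Type*} [Fintype V] (G : SimpleGraph V) (sign : Sym2 V → Bool)
    (A : Set V) : balCount G sign A ≤ beta G sign :=
  le_csSup (bddAbove_beta G sign) ⟨A, rfl⟩

private lemma beta_spec {V : Type*} [Fintype V] (G : SimpleGraph V) (sign : Sym2 V → Bool) :
    ∃ A : Set V, beta G sign = balCount G sign A :=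
  by
  exact Nat.sSup_mem (s := {n | ∃ A : Set V, n = balCount G sign A})
    ⟨balCount G sign ∅, ⟨∅, rfl⟩⟩ (bddAbove_beta G sign)

set_option maxHeartbeats 1000000 in
/-- safety of Rule 1. If `a, b, c` form a positive triangle in a
connected signed graph `G` and `G − {a,b,c}` is connected and nonempty, then
`β(G) − pt(G) ≥ β(G − {a,b,c}) − pt(G − {a,b,c}) + 3/4`. -/
theorem stmt9 {V : Type*} [Fintype V] (G : SimpleGraph V) (sign : Sym2 V → Bool)
    (hconn : G.Connected) (a b c : V) (hab : a ≠ b) (hbc : b ≠ c) (hac : a ≠ c)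
    (htri : PositiveTriangle G sign a b c)
    (hrest : (G.induce ({a, b, c}ᶜ : Set V)).Connected) :
    (beta G sign : ℚ) - pt G ≥
      (betaOn G sign ({a, b, c}ᶜ : Set V) : ℚ) - ptOn G ({a, b, c}ᶜ : Set V) + 3 / 4 := by
  classical
  set U : Set V := ({a, b, c}ᶜ : Set V) with hU
  obtain ⟨gab, gbc, gca, heven⟩ := htri
  have haU : a ∉ U := by simp [hU]
  have hbU : b ∉ U := by simp [hU]
  have hcU : c ∉ U := by simp [hU]
  have hnotU : ∀ v : V, v ∉ U → v = a ∨ v = b ∨ v = c := by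
    intro v hv
    rw [hU, Set.mem_compl_iff, not_not] at hv
    simpa using hv
  -- choose a balanced placement of the triangle
  obtain ⟨pa, pb, pc, h1, h2, h3⟩ :
      ∃ pa pb pc : Prop, (sign s(a, b) = true ↔ (pa ↔ pb)) ∧
        (sign s(b, c) = true ↔ (pb ↔ pc)) ∧ (sign s(c, a) = true ↔ (pc ↔ pa)) := by
    cases hsab : sign s(a, b) <;> cases hsbc : sign s(b, c) <;> cases hsca : sign s(c, a)
    · exfalso; simp [hsab, hsbc, hsca, Nat.even_iff] at heven
    · exact ⟨True, False, True, by simp [hsab], by simp [hsbc], by simp [hsca]⟩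
    · exact ⟨True, False, False, by simp [hsab], by simp [hsbc], by simp [hsca]⟩
    · exfalso; simp [hsab, hsbc, hsca, Nat.even_iff] at heven
    · exact ⟨True, True, False, by simp [hsab], by simp [hsbc], by simp [hsca]⟩
    · exfalso; simp [hsab, hsbc, hsca, Nat.even_iff] at heven
    · exfalso; simp [hsab, hsbc, hsca, Nat.even_iff] at heven
    · exact ⟨True, True, True, by simp [hsab], by simp [hsbc], by simp [hsca]⟩
  set sign' : Sym2 ↥U → Bool := fun e => sign (Sym2.map Subtype.val e) with hsign'
  obtain ⟨A', hA'⟩ := beta_spec (G.induce U) sign'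
  set τ : V → Prop := fun v => (v = a ∧ pa) ∨ (v = b ∧ pb) ∨ (v = c ∧ pc) with hτ
  set A₁ : Set V := {v | (∃ h : v ∈ U, (⟨v, h⟩ : ↥U) ∈ A') ∨ (v ∉ U ∧ τ v)} with hA₁
  set A₂ : Set V := {v | (∃ h : v ∈ U, (⟨v, h⟩ : ↥U) ∈ A') ∨ (v ∉ U ∧ ¬ τ v)} with hA₂
  have memU₁ : ∀ v (h : v ∈ U), (v ∈ A₁ ↔ (⟨v, h⟩ : ↥U) ∈ A') := by
    intro v h
    simp only [hA₁, Set.mem_setOf_eq]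
    constructor
    · rintro (⟨h', hv⟩ | ⟨hn, _⟩)
      · exact hv
      · exact absurd h hn
    · intro hv; exact Or.inl ⟨h, hv⟩
  have memU₂ : ∀ v (h : v ∈ U), (v ∈ A₂ ↔ (⟨v, h⟩ : ↥U) ∈ A') := by
    intro v h
    simp only [hA₂, Set.mem_setOf_eq]
    constructor
    · rintro (⟨h', hv⟩ | ⟨hn, _⟩)
      · exact hv
      · exact absurd h hn
    · intro hv; exact Or.inl ⟨h, hv⟩
  have memT₁ : ∀ v, v ∉ U → (v ∈ A₁ ↔ τ v) := by
    intro v hv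
    simp only [hA₁, Set.mem_setOf_eq]
    constructor
    · rintro (⟨h', _⟩ | ⟨_, h⟩)
      · exact absurd h' hv
      · exact h
    · intro h; exact Or.inr ⟨hv, h⟩
  have memT₂ : ∀ v, v ∉ U → (v ∈ A₂ ↔ ¬ τ v) := by
    intro v hv
    simp only [hA₂, Set.mem_setOf_eq]
    constructor
    · rintro (⟨h', _⟩ | ⟨_, h⟩)
      · exact absurd h' hv
      · exact h
    · intro h; exact Or.inr ⟨hv, h⟩
  have τa : τ a ↔ pa := by simp [hτ, hab, hac]
  have τb : τ b ↔ pb := by simp [hτ, hab.symm, hbc]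
  have τc : τ c ↔ pc := by simp [hτ, hac.symm, hbc.symm]
  have ha1 : a ∈ A₁ ↔ pa := (memT₁ a haU).trans τa
  have hb1 : b ∈ A₁ ↔ pb := (memT₁ b hbU).trans τb
  have hc1 : c ∈ A₁ ↔ pc := (memT₁ c hcU).trans τc
  have ha2 : a ∈ A₂ ↔ ¬ pa := (memT₂ a haU).trans (not_congr τa)
  have hb2 : b ∈ A₂ ↔ ¬ pb := (memT₂ b hbU).trans (not_congr τb)
  have hc2 : c ∈ A₂ ↔ ¬ pc := (memT₂ c hcU).trans (not_congr τc)
  -- edge classification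
  set EU : Set (Sym2 V) := {e | e ∈ G.edgeSet ∧ ∀ v ∈ e, v ∈ U} with hEUd
  set ET : Set (Sym2 V) := {e | e ∈ G.edgeSet ∧ ∀ v ∈ e, v ∉ U} with hETd
  set EX : Set (Sym2 V) := {e | e ∈ G.edgeSet ∧ (∃ v ∈ e, v ∈ U) ∧ ∃ v ∈ e, v ∉ U} with hEXd
  have hcover : G.edgeSet ⊆ EU ∪ ET ∪ EX := by
    intro e he
    obtain ⟨u, v, rfl⟩ := sym2_cases e
    by_cases hu : u ∈ U <;> by_cases hv : v ∈ U
    · refine Or.inl (Or.inl ⟨he, ?_⟩)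
      intro w hw; rcases Sym2.mem_iff.mp hw with rfl | rfl <;> assumption
    · exact Or.inr ⟨he, ⟨u, Sym2.mem_mk_left u v, hu⟩, ⟨v, Sym2.mem_mk_right u v, hv⟩⟩
    · exact Or.inr ⟨he, ⟨v, Sym2.mem_mk_right u v, hv⟩, ⟨u, Sym2.mem_mk_left u v, hu⟩⟩
    · refine Or.inl (Or.inr ⟨he, ?_⟩)
      intro w hw; rcases Sym2.mem_iff.mp hw with rfl | rfl <;> assumption
  have dUT : Disjoint EU ET := by
    rw [Set.disjoint_left]
    intro e h1' h2'
    obtain ⟨u, v, rfl⟩ := sym2_cases e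
    exact h2'.2 u (Sym2.mem_mk_left u v) (h1'.2 u (Sym2.mem_mk_left u v))
  have dUX : Disjoint EU EX := by
    rw [Set.disjoint_left]
    rintro e ⟨_, hall⟩ ⟨_, _, w, hw, hwU⟩
    exact hwU (hall w hw)
  have dTX : Disjoint ET EX := by
    rw [Set.disjoint_left]
    rintro e ⟨_, hall⟩ ⟨_, ⟨w, hw, hwU⟩, _⟩
    exact hall w hw hwU
  -- the triangle edges
  set TRI : Set (Sym2 V) := {s(a, b), s(b, c), s(c, a)} with hTRId
  have ne1 : s(a, b) ≠ s(b, c) := by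
    intro h
    rcases Sym2.eq_iff.mp h with ⟨h1, _⟩ | ⟨h1, _⟩
    · exact hab h1
    · exact hac h1
  have ne2 : s(a, b) ≠ s(c, a) := by
    intro h
    rcases Sym2.eq_iff.mp h with ⟨h1, _⟩ | ⟨_, h2⟩
    · exact hac h1
    · exact hbc h2
  have ne3 : s(b, c) ≠ s(c, a) := by
    intro h
    rcases Sym2.eq_iff.mp h with ⟨h1, _⟩ | ⟨h1, _⟩
    · exact hbc h1
    · exact hab h1.symm
  have hTRI3 : TRI.ncard = 3 := Set.ncard_eq_three.mpr ⟨_, _, _, ne1, ne2, ne3, rfl⟩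
  have m1 : s(a, b) ∈ TRI := Or.inl rfl
  have m2 : s(b, c) ∈ TRI := Or.inr (Or.inl rfl)
  have m3 : s(c, a) ∈ TRI := Or.inr (Or.inr rfl)
  have m1' : s(b, a) ∈ TRI := by rw [Sym2.eq_swap]; exact m1
  have m2' : s(c, b) ∈ TRI := by rw [Sym2.eq_swap]; exact m2
  have m3' : s(a, c) ∈ TRI := by rw [Sym2.eq_swap]; exact m3
  have hTRI_ET : TRI ⊆ ET := by
    rintro e (rfl | rfl | rfl) <;>
      refine ⟨by simpa using (by assumption : G.Adj _ _), ?_⟩ <;>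
      · intro w hw
        rcases Sym2.mem_iff.mp hw with rfl | rfl <;> assumption
  have hET_sub : ET ⊆ TRI := by
    rintro e ⟨he, hall⟩
    obtain ⟨u, v, rfl⟩ := sym2_cases e
    have hadj : G.Adj u v := (SimpleGraph.mem_edgeSet G).mp he
    have hu := hnotU u (hall u (Sym2.mem_mk_left u v))
    have hv := hnotU v (hall v (Sym2.mem_mk_right u v))
    rcases hu with rfl | rfl | rfl <;> rcases hv with rfl | rfl | rfl <;>
      first
        | exact absurd rfl hadj.ne
        | assumption
  have hET_le : ET.ncard ≤ 3 := hTRI3 ▸ Set.ncard_le_ncard hET_sub (Set.toFinite _)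
  -- EU vs induced edges
  set φ : Sym2 ↥U → Sym2 V := Sym2.map (Subtype.val : ↥U → V) with hφ
  have hφinj : Function.Injective φ := Sym2.map.injective Subtype.val_injective
  have hEU_le : EU.ncard ≤ (G.induce U).edgeSet.ncard := by
    refine le_trans (Set.ncard_le_ncard ?_ (Set.toFinite _))
      (le_of_eq (Set.ncard_image_of_injective _ hφinj))
    rintro e ⟨he, hall⟩
    obtain ⟨u, v, rfl⟩ := sym2_cases e
    have hu : u ∈ U := hall u (Sym2.mem_mk_left u v)
    have hv : v ∈ U := hall v (Sym2.mem_mk_right u v)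
    have hadj : G.Adj u v := (SimpleGraph.mem_edgeSet G).mp he
    refine ⟨s(⟨u, hu⟩, ⟨v, hv⟩), (SimpleGraph.mem_edgeSet _).mpr ?_, Sym2.map_pair_eq _ _ _⟩
    simpa using hadj
  have hm_le : G.edgeSet.ncard ≤ (G.induce U).edgeSet.ncard + 3 + EX.ncard := by
    calc G.edgeSet.ncard ≤ (EU ∪ ET ∪ EX).ncard :=
          Set.ncard_le_ncard hcover (Set.toFinite _)
      _ ≤ (EU ∪ ET).ncard + EX.ncard := Set.ncard_union_le _ _
      _ ≤ EU.ncard + ET.ncard + EX.ncard :=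
          add_le_add_left (Set.ncard_union_le _ _) _
      _ ≤ (G.induce U).edgeSet.ncard + 3 + EX.ncard := by
          have := hEU_le; have := hET_le; omega
  -- consistent edges inside U
  set CS : Set (Sym2 ↥U) := {e | e ∈ (G.induce U).edgeSet ∧ SignConsistent sign' A' e}
    with hCSd
  have hCScard : CS.ncard = balCount (G.induce U) sign' A' := rfl
  have hCS_EU : φ '' CS ⊆ EU := by
    rintro e ⟨e', ⟨he', _⟩, rfl⟩
    obtain ⟨⟨u, hu⟩, ⟨v, hv⟩, rfl⟩ := sym2_cases e'
    have hadj : G.Adj u v := by simpa using (SimpleGraph.mem_edgeSet _).mp he'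
    rw [hφ, Sym2.map_pair_eq]
    refine ⟨(SimpleGraph.mem_edgeSet G).mpr hadj, ?_⟩
    intro w hw; rcases Sym2.mem_iff.mp hw with rfl | rfl <;> assumption
  have hCScons : ∀ (A : Set V), (∀ v (h : v ∈ U), (v ∈ A ↔ (⟨v, h⟩ : ↥U) ∈ A')) →
      ∀ e ∈ φ '' CS, SignConsistent sign A e := by
    rintro A hA e ⟨e', ⟨he', hc⟩, rfl⟩
    obtain ⟨⟨u, hu⟩, ⟨v, hv⟩, rfl⟩ := sym2_cases e'
    have hc' := (signConsistent_pair _ _ _ _).mp hc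
    simp only [hsign', Sym2.map_pair_eq] at hc'
    rw [hφ, Sym2.map_pair_eq]
    refine (signConsistent_pair _ _ _ _).mpr ?_
    rw [hA u hu, hA v hv]
    exact hc'
  -- key counting bound
  have key : ∀ (A : Set V), (∀ v (h : v ∈ U), (v ∈ A ↔ (⟨v, h⟩ : ↥U) ∈ A')) →
      ∀ CX : Set (Sym2 V), CX ⊆ EX → (∀ e ∈ CX, SignConsistent sign A e) →
      (∀ e ∈ TRI, SignConsistent sign A e) →
      CS.ncard + 3 + CX.ncard ≤ balCount G sign A := by
    intro A hA CX hCXsub hCXcons hTRIcons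
    have hsub : (φ '' CS ∪ TRI) ∪ CX ⊆ {e | e ∈ G.edgeSet ∧ SignConsistent sign A e} := by
      rintro e ((he | he) | he)
      · exact ⟨(hCS_EU he).1, hCScons A hA e he⟩
      · refine ⟨?_, hTRIcons e he⟩
        exact (hTRI_ET he).1
      · exact ⟨(hCXsub he).1, hCXcons e he⟩
    have d1 : Disjoint (φ '' CS) TRI := Set.disjoint_of_subset hCS_EU hTRI_ET dUT
    have d2 : Disjoint (φ '' CS ∪ TRI) CX := by
      refine Set.disjoint_of_subset (Set.union_subset_union hCS_EU hTRI_ET) hCXsub ?_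
      exact Set.disjoint_union_left.mpr ⟨dUX, dTX⟩
    calc CS.ncard + 3 + CX.ncard
        = ((φ '' CS ∪ TRI) ∪ CX).ncard := by
          rw [Set.ncard_union_eq d2 (Set.toFinite _) (Set.toFinite _),
            Set.ncard_union_eq d1 (Set.toFinite _) (Set.toFinite _),
            Set.ncard_image_of_injective _ hφinj, hTRI3]
      _ ≤ balCount G sign A := Set.ncard_le_ncard hsub (Set.toFinite _)
  -- triangle edges are consistent with both partitions
  have hTRIcons1 : ∀ e ∈ TRI, SignConsistent sign A₁ e := by
    rintro e (rfl | rfl | rfl)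
    · exact (signConsistent_pair _ _ _ _).mpr (by rw [ha1, hb1]; exact h1)
    · exact (signConsistent_pair _ _ _ _).mpr (by rw [hb1, hc1]; exact h2)
    · exact (signConsistent_pair _ _ _ _).mpr (by rw [hc1, ha1]; exact h3)
  have hTRIcons2 : ∀ e ∈ TRI, SignConsistent sign A₂ e := by
    rintro e (rfl | rfl | rfl)
    · exact (signConsistent_pair _ _ _ _).mpr (by rw [ha2, hb2, not_iff_not]; exact h1)
    · exact (signConsistent_pair _ _ _ _).mpr (by rw [hb2, hc2, not_iff_not]; exact h2)
    · exact (signConsistent_pair _ _ _ _).mpr (by rw [hc2, ha2, not_iff_not]; exact h3)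
  -- each cross edge is consistent with one of the two partitions
  have crossRep : ∀ e ∈ EX, ∃ x v, x ∉ U ∧ v ∈ U ∧ e = s(x, v) := by
    intro e heX
    obtain ⟨u, v, rfl⟩ := sym2_cases e
    obtain ⟨-, ⟨w, hw, hwU⟩, ⟨x, hx, hxU⟩⟩ := heX
    by_cases hu : u ∈ U <;> by_cases hv : v ∈ U
    · rcases Sym2.mem_iff.mp hx with rfl | rfl
      · exact absurd hu hxU
      · exact absurd hv hxU
    · exact ⟨v, u, hv, hu, Sym2.eq_swap⟩
    · exact ⟨u, v, hu, hv, rfl⟩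
    · rcases Sym2.mem_iff.mp hw with rfl | rfl
      · exact absurd hwU hu
      · exact absurd hwU hv
  set CX₁ : Set (Sym2 V) := {e | e ∈ EX ∧ SignConsistent sign A₁ e} with hCX₁d
  set CX₂ : Set (Sym2 V) := {e | e ∈ EX ∧ SignConsistent sign A₂ e} with hCX₂d
  have hEXsub : EX ⊆ CX₁ ∪ CX₂ := by
    intro e he
    obtain ⟨x, v, hxU, hvU, rfl⟩ := crossRep e he
    have hx1 : x ∈ A₁ ↔ τ x := memT₁ x hxU
    have hx2 : x ∈ A₂ ↔ ¬ τ x := memT₂ x hxU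
    have hv12 : v ∈ A₁ ↔ v ∈ A₂ := (memU₁ v hvU).trans (memU₂ v hvU).symm
    rcases Classical.em (sign s(x, v) = true ↔ (x ∈ A₁ ↔ v ∈ A₁)) with hcase | hcase
    · exact Or.inl ⟨he, (signConsistent_pair _ _ _ _).mpr hcase⟩
    · exact Or.inr ⟨he, (signConsistent_pair _ _ _ _).mpr
        (cross_flip (hx2.trans (not_congr hx1).symm) hv12 hcase)⟩
  have hEX_le : EX.ncard ≤ CX₁.ncard + CX₂.ncard :=
    le_trans (Set.ncard_le_ncard hEXsub (Set.toFinite _)) (Set.ncard_union_le _ _)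
  -- assemble the two lower bounds on beta
  have hbound1 : CS.ncard + 3 + CX₁.ncard ≤ beta G sign :=
    le_trans (key A₁ memU₁ CX₁ (fun e he => he.1) (fun e he => he.2) hTRIcons1)
      (le_beta G sign A₁)
  have hbound2 : CS.ncard + 3 + CX₂.ncard ≤ beta G sign :=
    le_trans (key A₂ memU₂ CX₂ (fun e he => he.1) (fun e he => he.2) hTRIcons2)
      (le_beta G sign A₂)
  -- vertex count
  have hn : Nat.card V ≤ Nat.card ↥U + 3 := by
    have h1' := Set.ncard_add_ncard_compl U
    have h2' : (Uᶜ : Set V).ncard ≤ 3 := by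
      rw [hU, compl_compl]
      calc ({a, b, c} : Set V).ncard ≤ ({b, c} : Set V).ncard + 1 := Set.ncard_insert_le _ _
        _ ≤ ({c} : Set V).ncard + 1 + 1 := add_le_add_left (Set.ncard_insert_le _ _) _
        _ ≤ 3 := by simp
    rw [Nat.card_coe_set_eq]
    omega
  -- components
  have htG : Nat.card G.ConnectedComponent = 1 := card_cc_eq_one hconn
  have htU : Nat.card (G.induce U).ConnectedComponent = 1 := card_cc_eq_one hrest
  -- final arithmetic
  have hβ' : beta (SimpleGraph.induce U G) (fun e => sign (Sym2.map Subtype.val e))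
      = CS.ncard := by
    rw [← hsign', hA', hCScard]
  simp only [pt, ptOn, betaOn, ge_iff_le, htG, htU]
  rw [hβ']
  have c1 : (CS.ncard : ℚ) + 3 + CX₁.ncard ≤ beta G sign := by exact_mod_cast hbound1
  have c2 : (CS.ncard : ℚ) + 3 + CX₂.ncard ≤ beta G sign := by exact_mod_cast hbound2
  have c3 : (EX.ncard : ℚ) ≤ CX₁.ncard + CX₂.ncard := by exact_mod_cast hEX_le
  have c4 : (G.edgeSet.ncard : ℚ) ≤ (G.induce U).edgeSet.ncard + 3 + EX.ncard := by
    exact_mod_cast hm_le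
  have c5 : (Nat.card V : ℚ) ≤ Nat.card ↥U + 3 := by exact_mod_cast hn
  push_cast
  linarith
end

section
/- Let G be a connected signed graph and v, b nonadjacent vertices such that G−{v,b} has exactly two connected components, with vertex sets C and Y, and such that both G[C∪{v}] and G[C∪{b}] are cliques containing no positive triangle. Then β(G) − pt(G) ≥ β(G[Y]) − pt(G[Y]) + 1/4. -/
/- ### Auxiliary lemmas -/

lemma signConsistent_pair_iff {V : Type*} (sign : Sym2 V → Bool) (A : Set V) (u w : V) :
    SignConsistent sign A s(u, w) ↔ (sign s(u, w) = true ↔ (u ∈ A ↔ w ∈ A)) := by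
  constructor
  · intro H; exact H u w rfl
  · intro H u' w' he
    rw [Sym2.eq_iff] at he
    rcases he with ⟨rfl, rfl⟩ | ⟨rfl, rfl⟩
    · exact H
    · tauto

lemma bddAbove_betaSet {V : Type*} [Finite V] (G : SimpleGraph V) (sign : Sym2 V → Bool) :
    BddAbove {n | ∃ A : Set V, n = balCount G sign A} := by
  refine ⟨G.edgeSet.ncard, ?_⟩
  rintro n ⟨A, rfl⟩
  exact Set.ncard_le_ncard (fun e he => he.1) (Set.toFinite _)

lemma balCount_le_beta {V : Type*} [Finite V] (G : SimpleGraph V) (sign : Sym2 V → Bool)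
    (A : Set V) : balCount G sign A ≤ beta G sign :=
  le_csSup (bddAbove_betaSet G sign) ⟨A, rfl⟩

lemma exists_beta_eq {V : Type*} [Finite V] (G : SimpleGraph V) (sign : Sym2 V → Bool) :
    ∃ A : Set V, beta G sign = balCount G sign A := by
  have hne : {n | ∃ A : Set V, n = balCount G sign A}.Nonempty := ⟨balCount G sign ∅, ∅, rfl⟩
  exact Nat.sSup_mem hne (bddAbove_betaSet G sign)

lemma card_components_eq_one {V : Type*} (G : SimpleGraph V) (h : G.Connected) :
    Nat.card G.ConnectedComponent = 1 := by
  rw [Nat.card_eq_one_iff_unique]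
  constructor
  · constructor
    intro a c
    obtain ⟨u, rfl⟩ := a.exists_rep
    obtain ⟨w, rfl⟩ := c.exists_rep
    exact SimpleGraph.ConnectedComponent.eq.mpr (h.preconnected u w)
  · exact ⟨G.connectedComponentMk h.nonempty.some⟩

lemma ncard_prod' {α β : Type*} (s : Set α) (t : Set β) :
    (s ×ˢ t).ncard = s.ncard * t.ncard := by
  rw [← Nat.card_coe_set_eq, ← Nat.card_coe_set_eq, ← Nat.card_coe_set_eq,
    Nat.card_congr (Equiv.Set.prod s t), Nat.card_prod]

lemma image_induce_edgeSet {V : Type*} (G : SimpleGraph V) (U : Set V) :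
    Sym2.map (Subtype.val) '' (G.induce U).edgeSet
      = {e | e ∈ G.edgeSet ∧ ∀ x ∈ e, x ∈ U} := by
  ext e
  constructor
  · rintro ⟨e', he', rfl⟩
    induction e' using Sym2.ind with
    | _ x y =>
      simp only [SimpleGraph.mem_edgeSet, SimpleGraph.comap_adj,
        Function.Embedding.coe_subtype] at he'
      rw [Sym2.map_pair_eq]
      refine ⟨by simpa using he', ?_⟩
      intro z hz
      rw [Sym2.mem_iff] at hz
      rcases hz with rfl | rfl
      · exact x.2
      · exact y.2
  · rintro ⟨he, hU⟩
    induction e using Sym2.ind with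
    | _ x y =>
      have hx : x ∈ U := hU x (Sym2.mem_mk_left x y)
      have hy : y ∈ U := hU y (Sym2.mem_mk_right x y)
      refine ⟨s(⟨x, hx⟩, ⟨y, hy⟩), ?_, by rw [Sym2.map_pair_eq]⟩
      simpa using he

lemma image_induce_cons {V : Type*} (G : SimpleGraph V) (sign : Sym2 V → Bool) (U : Set V)
    (A : Set V) (A' : Set U) (hAA' : ∀ x : U, x.1 ∈ A ↔ x ∈ A') :
    Sym2.map (Subtype.val) ''
      {e | e ∈ (G.induce U).edgeSet ∧
        SignConsistent (fun e => sign (Sym2.map Subtype.val e)) A' e}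
      = {e | (e ∈ G.edgeSet ∧ ∀ x ∈ e, x ∈ U) ∧ SignConsistent sign A e} := by
  ext e
  constructor
  · rintro ⟨e', ⟨he', hc⟩, rfl⟩
    induction e' using Sym2.ind with
    | _ x y =>
      have hadj : G.Adj x.1 y.1 := by simpa using he'
      rw [Sym2.map_pair_eq]
      rw [signConsistent_pair_iff] at hc
      simp only [Sym2.map_pair_eq] at hc
      refine ⟨⟨hadj, ?_⟩, ?_⟩
      · intro z hz
        rw [Sym2.mem_iff] at hz
        rcases hz with rfl | rfl
        · exact x.2
        · exact y.2
      · rw [signConsistent_pair_iff, hAA' x, hAA' y]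
        exact hc
  · rintro ⟨⟨he, hU⟩, hc⟩
    induction e using Sym2.ind with
    | _ x y =>
      have hx : x ∈ U := hU x (Sym2.mem_mk_left x y)
      have hy : y ∈ U := hU y (Sym2.mem_mk_right x y)
      refine ⟨s(⟨x, hx⟩, ⟨y, hy⟩), ⟨?_, ?_⟩, by rw [Sym2.map_pair_eq]⟩
      · simpa using he
      · rw [signConsistent_pair_iff] at hc ⊢
        simp only [Sym2.map_pair_eq]
        rw [← hAA' ⟨x, hx⟩, ← hAA' ⟨y, hy⟩] at *
        exact hc

lemma exists_antibal {V : Type*} (G : SimpleGraph V) (sign : Sym2 V → Bool)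
    (v b : V) (hadj : ¬ G.Adj v b) (C : Set V)
    (hcliquev : G.IsClique (C ∪ {v})) (hcliqueb : G.IsClique (C ∪ {b}))
    (htriv : ¬ ∃ x y z : V, x ∈ C ∪ {v} ∧ y ∈ C ∪ {v} ∧ z ∈ C ∪ {v} ∧
      PositiveTriangle G sign x y z)
    (htrib : ¬ ∃ x y z : V, x ∈ C ∪ {b} ∧ y ∈ C ∪ {b} ∧ z ∈ C ∪ {b} ∧
      PositiveTriangle G sign x y z)
    (c0 : V) (hc0 : c0 ∈ C) :
    ∃ g : V → Bool, ∀ u ∈ C ∪ {v, b}, ∀ w ∈ C ∪ {v, b}, G.Adj u w →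
      (sign s(u, w) = true ↔ g u ≠ g w) := by
  classical
  have htri : ∀ (S : Set V), G.IsClique S →
      (¬ ∃ x y z : V, x ∈ S ∧ y ∈ S ∧ z ∈ S ∧ PositiveTriangle G sign x y z) →
      c0 ∈ S → ∀ x ∈ S, ∀ y ∈ S, x ≠ c0 → y ≠ c0 → x ≠ y →
      (sign s(x, y) = true ↔ sign s(c0, x) ≠ sign s(c0, y)) := by
    intro S hclique hnt hc0S x hx y hy hxc0 hyc0 hxy
    have a1 : G.Adj c0 x := hclique hc0S hx (Ne.symm hxc0)
    have a2 : G.Adj x y := hclique hx hy hxy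
    have a3 : G.Adj y c0 := hclique hy hc0S hyc0
    have hodd : ¬ Even ((if sign s(c0, x) then 0 else 1) + (if sign s(x, y) then 0 else 1) +
        (if sign s(y, c0) then 0 else 1)) := by
      intro hEven
      exact hnt ⟨c0, x, y, hc0S, hx, hy, a1, a2, a3, hEven⟩
    have hswap : s(y, c0) = s(c0, y) := Sym2.eq_swap
    rw [hswap] at hodd
    rcases h1 : sign s(c0, x) <;> rcases h2 : sign s(x, y) <;> rcases h3 : sign s(c0, y) <;>
      simp [h1, h2, h3] at hodd ⊢
  refine ⟨fun x => if x = c0 then false else sign s(c0, x), ?_⟩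
  intro u hu w hw hadjuw
  have huw : u ≠ w := G.ne_of_adj hadjuw
  by_cases huc0 : u = c0
  · subst huc0
    have hwu : w ≠ u := fun h => huw h.symm
    simp only [if_neg hwu, if_pos rfl]
    rcases h : sign s(u, w) <;> simp [h]
  · by_cases hwc0 : w = c0
    · subst hwc0
      have hswap : s(u, w) = s(w, u) := Sym2.eq_swap
      simp only [if_neg huc0, if_pos rfl, hswap]
      rcases h : sign s(w, u) <;> simp [h]
    · have key : (u ∈ C ∪ {v} ∧ w ∈ C ∪ {v}) ∨ (u ∈ C ∪ {b} ∧ w ∈ C ∪ {b}) := by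
        rcases hu with hu | hu
        · rcases hw with hw | hw
          · exact Or.inl ⟨Or.inl hu, Or.inl hw⟩
          · rcases hw with rfl | rfl
            · exact Or.inl ⟨Or.inl hu, Or.inr rfl⟩
            · exact Or.inr ⟨Or.inl hu, Or.inr rfl⟩
        · rcases hu with rfl | rfl
          · rcases hw with hw | hw
            · exact Or.inl ⟨Or.inr rfl, Or.inl hw⟩
            · rcases hw with rfl | rfl
              · exact absurd rfl huw
              · exact absurd hadjuw hadj
          · rcases hw with hw | hw
            · exact Or.inr ⟨Or.inr rfl, Or.inl hw⟩
            · rcases hw with rfl | rfl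
              · exact absurd hadjuw (fun h => hadj h.symm)
              · exact absurd rfl huw
      have hmain : sign s(u, w) = true ↔ sign s(c0, u) ≠ sign s(c0, w) := by
        rcases key with ⟨h1, h2⟩ | ⟨h1, h2⟩
        · exact htri _ hcliquev htriv (Or.inl hc0) u h1 w h2 huc0 hwc0 huw
        · exact htri _ hcliqueb htrib (Or.inl hc0) u h1 w h2 huc0 hwc0 huw
      simpa [if_neg huc0, if_neg hwc0] using hmain

lemma natkey (k mW : ℕ) (hk : 1 ≤ k) (hmW : 2 * mW + 2 ≤ (k + 2) * (k + 1)) :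
    2 * mW + k + 3 ≤ 4 * ((k / 2 + 1) * (k + 2 - (k / 2 + 1))) := by
  rcases Nat.even_or_odd k with ⟨j, hj⟩ | ⟨j, hj⟩
  · subst hj
    have h1 : (j + j) / 2 = j := by omega
    have h2 : j + j + 2 - (j + 1) = j + 1 := by omega
    rw [h1, h2]
    nlinarith
  · subst hj
    have h1 : (2 * j + 1) / 2 = j := by omega
    have h2 : 2 * j + 1 + 2 - (j + 1) = j + 2 := by omega
    rw [h1, h2]
    nlinarith

set_option maxHeartbeats 1000000 in
/-- safety of Rule 7. Let `G` be a connected signed graph and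
`v, b` nonadjacent vertices such that `G − {v,b}` has exactly two connected
components, with vertex sets `C` and `Y`, and such that both `G[C ∪ {v}]` and
`G[C ∪ {b}]` are cliques containing no positive triangle. Then
`β(G) − pt(G) ≥ β(G[Y]) − pt(G[Y]) + 1/4`. -/
theorem stmt13 {V : Type*} [Fintype V] (G : SimpleGraph V) (sign : Sym2 V → Bool)
    (hconn : G.Connected) (v b : V) (hvb : v ≠ b) (hadj : ¬ G.Adj v b)
    (C Y : Set V) (hC : IsCompOf G {v, b} C) (hY : IsCompOf G {v, b} Y)
    (hCY : Disjoint C Y) (hcover : C ∪ Y = ({v, b}ᶜ : Set V))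
    (hcliquev : G.IsClique (C ∪ {v})) (hcliqueb : G.IsClique (C ∪ {b}))
    (htriv : ¬ ∃ x y z : V, x ∈ C ∪ {v} ∧ y ∈ C ∪ {v} ∧ z ∈ C ∪ {v} ∧
      PositiveTriangle G sign x y z)
    (htrib : ¬ ∃ x y z : V, x ∈ C ∪ {b} ∧ y ∈ C ∪ {b} ∧ z ∈ C ∪ {b} ∧
      PositiveTriangle G sign x y z) :
    (beta G sign : ℚ) - pt G ≥ (betaOn G sign Y : ℚ) - ptOn G Y + 1 / 4 := by
  classical
  obtain ⟨hCdisj, hCconn, hCclose⟩ := hC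
  obtain ⟨hYdisj, hYconn, hYclose⟩ := hY
  set W : Set V := C ∪ {v, b} with hWdef
  have hvW : v ∈ W := Or.inr (by simp)
  have hbW : b ∈ W := Or.inr (by simp)
  have hvY : v ∉ Y := fun h => (Set.disjoint_left.mp hYdisj h) (by simp)
  have hbY : b ∉ Y := fun h => (Set.disjoint_left.mp hYdisj h) (by simp)
  have hvC : v ∉ C := fun h => (Set.disjoint_left.mp hCdisj h) (by simp)
  have hbC : b ∉ C := fun h => (Set.disjoint_left.mp hCdisj h) (by simp)
  have hCW : C ⊆ W := Set.subset_union_left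
  have hWY : Disjoint W Y := by
    rw [hWdef, Set.disjoint_union_left]
    exact ⟨hCY, hYdisj.symm⟩
  have hYW : ∀ x : V, x ∈ Y ∨ x ∈ W := by
    intro x
    by_cases hx : x ∈ Y
    · exact Or.inl hx
    by_cases hxvb : x ∈ ({v, b} : Set V)
    · exact Or.inr (Or.inr hxvb)
    · have hx2 : x ∈ C ∪ Y := by rw [hcover]; exact hxvb
      rcases hx2 with h | h
      · exact Or.inr (Or.inl h)
      · exact Or.inl h
  have hCne : C.Nonempty := Set.nonempty_coe_sort.mp hCconn.nonempty
  obtain ⟨c0, hc0⟩ := hCne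
  set k := C.ncard with hkdef
  have hk1 : 1 ≤ k := (Set.ncard_pos (Set.toFinite C)).mpr ⟨c0, hc0⟩
  obtain ⟨C1, hC1sub, hC1card⟩ := Set.exists_subset_card_eq
    (show k / 2 + 1 ≤ C.ncard by omega)
  obtain ⟨g, hg⟩ := exists_antibal G sign v b hadj C hcliquev hcliqueb htriv htrib c0 hc0
  obtain ⟨A', hA'⟩ := exists_beta_eq (G.induce Y) (fun e => sign (Sym2.map Subtype.val e))
  -- the two candidate partitions
  set A : Bool → Set V := fun ε =>
    {x | if hx : x ∈ Y then (⟨x, hx⟩ ∈ A') else (((g x = true) ↔ x ∈ C1) ↔ ε = true)}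
    with hAdef
  have hmemY : ∀ (ε : Bool) (x : V) (hx : x ∈ Y), (x ∈ A ε ↔ (⟨x, hx⟩ : ↥Y) ∈ A') := by
    intro ε x hx
    simp only [hAdef, Set.mem_setOf_eq, dif_pos hx]
  have hmemW : ∀ (ε : Bool) (x : V), x ∉ Y →
      (x ∈ A ε ↔ (((g x = true) ↔ x ∈ C1) ↔ ε = true)) := by
    intro ε x hx
    simp only [hAdef, Set.mem_setOf_eq, dif_neg hx]
  -- edge classes
  set EY : Set (Sym2 V) := {e | e ∈ G.edgeSet ∧ ∀ x ∈ e, x ∈ Y} with hEYdef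
  set EW : Set (Sym2 V) := {e | e ∈ G.edgeSet ∧ ∀ x ∈ e, x ∈ W} with hEWdef
  set Ev : Set (Sym2 V) := {e | e ∈ G.edgeSet ∧ v ∈ e ∧ ∃ y ∈ Y, y ∈ e} with hEvdef
  set Eb : Set (Sym2 V) := {e | e ∈ G.edgeSet ∧ b ∈ e ∧ ∃ y ∈ Y, y ∈ e} with hEbdef
  have hEvStruct : ∀ e ∈ Ev, ∃ y ∈ Y, e = s(v, y) ∧ G.Adj v y := by
    rintro e ⟨he, hv, y, hy, hye⟩
    have hvy : v ≠ y := fun h => hvY (h ▸ hy)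
    have heq : e = s(v, y) := (Sym2.mem_and_mem_iff hvy).mp ⟨hv, hye⟩
    exact ⟨y, hy, heq, (SimpleGraph.mem_edgeSet G).mp (heq ▸ he)⟩
  have hEbStruct : ∀ e ∈ Eb, ∃ y ∈ Y, e = s(b, y) ∧ G.Adj b y := by
    rintro e ⟨he, hb, y, hy, hye⟩
    have hby : b ≠ y := fun h => hbY (h ▸ hy)
    have heq : e = s(b, y) := (Sym2.mem_and_mem_iff hby).mp ⟨hb, hye⟩
    exact ⟨y, hy, heq, (SimpleGraph.mem_edgeSet G).mp (heq ▸ he)⟩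
  -- disjointness of the edge classes (element form)
  have dYW : ∀ e, e ∈ EY → e ∈ EW → False := by
    intro e he1 he2
    induction e using Sym2.ind with
    | _ x y =>
      exact (Set.disjoint_left.mp hWY) (he2.2 x (Sym2.mem_mk_left x y))
        (he1.2 x (Sym2.mem_mk_left x y))
  have dYv : ∀ e, e ∈ EY → e ∈ Ev → False := fun e he1 he2 => hvY (he1.2 v he2.2.1)
  have dYb : ∀ e, e ∈ EY → e ∈ Eb → False := fun e he1 he2 => hbY (he1.2 b he2.2.1)
  have dWv : ∀ e, e ∈ EW → e ∈ Ev → False := by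
    rintro e he1 ⟨_, _, y, hy, hye⟩
    exact (Set.disjoint_left.mp hWY) (he1.2 y hye) hy
  have dWb : ∀ e, e ∈ EW → e ∈ Eb → False := by
    rintro e he1 ⟨_, _, y, hy, hye⟩
    exact (Set.disjoint_left.mp hWY) (he1.2 y hye) hy
  have dvb : ∀ e, e ∈ Ev → e ∈ Eb → False := by
    intro e he1 he2
    have heq : e = s(v, b) := (Sym2.mem_and_mem_iff hvb).mp ⟨he1.2.1, he2.2.1⟩
    exact hadj ((SimpleGraph.mem_edgeSet G).mp (heq ▸ he1.1))
  -- the edge classes partition the edge set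
  have hcoverE : G.edgeSet = EY ∪ EW ∪ Ev ∪ Eb := by
    ext e
    constructor
    · intro he
      induction e using Sym2.ind with
      | _ x y =>
        have hxy : G.Adj x y := (SimpleGraph.mem_edgeSet G).mp he
        have hmemxy : ∀ z ∈ s(x, y), z = x ∨ z = y := fun z hz => Sym2.mem_iff.mp hz
        have hsplit : ∀ p q : V, G.Adj p q → p ∈ Y → q ∈ W → q = v ∨ q = b := by
          intro p q hpq hp hq
          rcases hq with hq | hq
          · exfalso
            have : p ∈ C := hCclose q hq p hpq.symm
              (fun hmem => (by rcases hmem with rfl | rfl; exact hvY hp; exact hbY hp))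
            exact (Set.disjoint_left.mp hCY) this hp
          · rcases hq with rfl | rfl
            · exact Or.inl rfl
            · exact Or.inr rfl
        rcases hYW x with hx | hx <;> rcases hYW y with hy | hy
        · exact Or.inl (Or.inl (Or.inl ⟨he, by
            intro z hz; rcases hmemxy z hz with rfl | rfl; exact hx; exact hy⟩))
        · rcases hsplit x y hxy hx hy with rfl | rfl
          · exact Or.inl (Or.inr ⟨he, Sym2.mem_mk_right x y, x, hx, Sym2.mem_mk_left x y⟩)
          · exact Or.inr ⟨he, Sym2.mem_mk_right x y, x, hx, Sym2.mem_mk_left x y⟩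
        · rcases hsplit y x hxy.symm hy hx with rfl | rfl
          · exact Or.inl (Or.inr ⟨he, Sym2.mem_mk_left x y, y, hy, Sym2.mem_mk_right x y⟩)
          · exact Or.inr ⟨he, Sym2.mem_mk_left x y, y, hy, Sym2.mem_mk_right x y⟩
        · exact Or.inl (Or.inl (Or.inr ⟨he, by
            intro z hz; rcases hmemxy z hz with rfl | rfl; exact hx; exact hy⟩))
    · rintro (((he | he) | he) | he) <;> exact he.1
  -- numeric decomposition of edges
  have hm : G.edgeSet.ncard = EY.ncard + EW.ncard + Ev.ncard + Eb.ncard := by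
    rw [hcoverE]
    rw [Set.ncard_union_eq (Set.disjoint_left.mpr (fun e he heb => by
      rcases he with (he | he) | he
      · exact dYb e he heb
      · exact dWb e he heb
      · exact dvb e he heb)) (Set.toFinite _) (Set.toFinite _)]
    rw [Set.ncard_union_eq (Set.disjoint_left.mpr (fun e he hev => by
      rcases he with he | he
      · exact dYv e he hev
      · exact dWv e he hev)) (Set.toFinite _) (Set.toFinite _)]
    rw [Set.ncard_union_eq (Set.disjoint_left.mpr (fun e he hew => dYW e he hew))
      (Set.toFinite _) (Set.toFinite _)]
  have hinj2 : Function.Injective (Sym2.map (Subtype.val : ↥Y → V)) :=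
    Sym2.map.injective Subtype.val_injective
  have hmY : (G.induce Y).edgeSet.ncard = EY.ncard := by
    calc (G.induce Y).edgeSet.ncard
        = (Sym2.map (Subtype.val) '' (G.induce Y).edgeSet).ncard :=
          (Set.ncard_image_of_injective _ hinj2).symm
      _ = EY.ncard := by rw [image_induce_edgeSet, ← hEYdef]
  have hWcard : W.ncard = k + 2 := by
    rw [hWdef, Set.ncard_union_eq hCdisj (Set.toFinite _) (Set.toFinite _),
      Set.ncard_pair hvb]
  -- bound on EW via the complete graph on W minus the edge vb
  have hmW : 2 * EW.ncard + 2 ≤ (k + 2) * (k + 1) := by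
    haveI := Fintype.ofFinite ↥W
    set v' : ↥W := ⟨v, hvW⟩ with hv'
    set b' : ↥W := ⟨b, hbW⟩ with hb'
    have hvb' : v' ≠ b' := fun h => hvb (congrArg Subtype.val h)
    have hsub : (G.induce W).edgeFinset ⊆ (⊤ : SimpleGraph ↥W).edgeFinset.erase s(v', b') := by
      intro e he
      rw [SimpleGraph.mem_edgeFinset] at he
      refine Finset.mem_erase.mpr ⟨?_, ?_⟩
      · intro h
        rw [h] at he
        have : G.Adj v b := by simpa using ((SimpleGraph.mem_edgeSet _).mp he)
        exact hadj this
      · rw [SimpleGraph.mem_edgeFinset]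
        induction e using Sym2.ind with
        | _ x y =>
          have : (G.induce W).Adj x y := (SimpleGraph.mem_edgeSet _).mp he
          exact (SimpleGraph.mem_edgeSet _).mpr ((SimpleGraph.top_adj x y).mpr this.ne)
    have hmemtop : s(v', b') ∈ (⊤ : SimpleGraph ↥W).edgeFinset := by
      rw [SimpleGraph.mem_edgeFinset]
      exact (SimpleGraph.mem_edgeSet _).mpr ((SimpleGraph.top_adj v' b').mpr hvb')
    have hcard1 : (G.induce W).edgeFinset.card ≤ (⊤ : SimpleGraph ↥W).edgeFinset.card - 1 := by
      calc (G.induce W).edgeFinset.card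
          ≤ ((⊤ : SimpleGraph ↥W).edgeFinset.erase s(v', b')).card := Finset.card_le_card hsub
        _ = (⊤ : SimpleGraph ↥W).edgeFinset.card - 1 := Finset.card_erase_of_mem hmemtop
    rw [SimpleGraph.card_edgeFinset_top_eq_card_choose_two] at hcard1
    have hcardW : Fintype.card ↥W = k + 2 := by
      rw [← Nat.card_eq_fintype_card, Nat.card_coe_set_eq, hWcard]
    rw [hcardW] at hcard1
    have hEWfin : EW.ncard = (G.induce W).edgeFinset.card := by
      have h1 : (G.induce W).edgeSet.ncard = EW.ncard := by
        calc (G.induce W).edgeSet.ncard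
            = (Sym2.map (Subtype.val) '' (G.induce W).edgeSet).ncard :=
              (Set.ncard_image_of_injective _
                (Sym2.map.injective Subtype.val_injective)).symm
          _ = EW.ncard := by rw [image_induce_edgeSet, ← hEWdef]
      rw [← h1, Set.ncard_eq_toFinset_card']
      exact congrArg Finset.card (Set.toFinset_congr rfl)
    obtain ⟨c, hc⟩ := Nat.even_mul_succ_self (k + 1)
    have h3 : (k + 2).choose 2 = c := by
      rw [Nat.choose_two_right]
      have h4 : (k + 2) * (k + 2 - 1) = c + c := by
        rw [show k + 2 - 1 = k + 1 from rfl, Nat.mul_comm]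
        exact hc
      rw [h4]; omega
    have hc2 : 2 ≤ c + c := by
      rw [← hc]
      calc 2 = 1 * 2 := rfl
        _ ≤ (k + 1) * (k + 2) := Nat.mul_le_mul (by omega) (by omega)
    rw [h3] at hcard1
    rw [hEWfin]
    have h5 : (k + 2) * (k + 1) = c + c := by rw [Nat.mul_comm]; exact hc
    rw [h5]
    omega
  -- vertex count and components
  have hnV : Nat.card V = Y.ncard + (k + 2) := by
    have huniv : (Set.univ : Set V) = Y ∪ W := by
      ext x
      simp only [Set.mem_univ, true_iff, Set.mem_union]
      exact hYW x
    rw [← Set.ncard_univ, huniv,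
      Set.ncard_union_eq hWY.symm (Set.toFinite _) (Set.toFinite _), hWcard]
  have hcompG : Nat.card G.ConnectedComponent = 1 := card_components_eq_one G hconn
  have hcompY : Nat.card (G.induce Y).ConnectedComponent = 1 :=
    card_components_eq_one _ hYconn
  -- consistent Y-edges realize betaOn for both choices of ε
  have hSY : ∀ ε : Bool,
      {e | (e ∈ G.edgeSet ∧ ∀ x ∈ e, x ∈ Y) ∧ SignConsistent sign (A ε) e}.ncard
        = betaOn G sign Y := by
    intro ε
    rw [← image_induce_cons G sign Y (A ε) A' (fun x => hmemY ε x.1 x.2),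
      Set.ncard_image_of_injective _ hinj2]
    rw [betaOn, hA', balCount]
  -- the cut edges inside W
  set T : Set (Sym2 V) := (fun p : V × V => s(p.1, p.2)) '' (C1 ×ˢ (W \ C1)) with hTdef
  have hC1W : C1 ⊆ W := fun x hx => hCW (hC1sub hx)
  have hTcard : T.ncard = (k / 2 + 1) * (k + 2 - (k / 2 + 1)) := by
    rw [hTdef, Set.ncard_image_of_injOn, ncard_prod', hC1card,
      Set.ncard_diff hC1W (Set.toFinite _), hWcard, hC1card]
    rintro ⟨x, y⟩ ⟨hx, hy⟩ ⟨x', y'⟩ ⟨hx', hy'⟩ hxy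
    simp only [Sym2.eq_iff] at hxy
    rcases hxy with ⟨rfl, rfl⟩ | ⟨rfl, rfl⟩
    · rfl
    · exact absurd hx' hy.2
  have hTprops : ∀ e ∈ T, e ∈ EW ∧ ∀ ε : Bool, SignConsistent sign (A ε) e := by
    rintro e ⟨⟨x, y⟩, ⟨hx, hy⟩, rfl⟩
    simp only at *
    have hxC : x ∈ C := hC1sub hx
    have hxy : x ≠ y := fun h => hy.2 (h ▸ hx)
    have hadjxy : G.Adj x y := by
      rcases hy.1 with hyC | hyvb
      · exact hcliquev (Or.inl hxC) (Or.inl hyC) hxy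
      · rcases hyvb with rfl | rfl
        · exact hcliquev (Or.inl hxC) (Or.inr rfl) hxy
        · exact hcliqueb (Or.inl hxC) (Or.inr rfl) hxy
    have hxW : x ∈ W := hCW hxC
    have hyW : y ∈ W := hy.1
    have hxnY : x ∉ Y := Set.disjoint_left.mp hWY hxW
    have hynY : y ∉ Y := Set.disjoint_left.mp hWY hyW
    constructor
    · refine ⟨(SimpleGraph.mem_edgeSet G).mpr hadjxy, ?_⟩
      intro z hz
      rcases Sym2.mem_iff.mp hz with rfl | rfl
      · exact hxW
      · exact hyW
    · intro ε
      rw [signConsistent_pair_iff, hg x hxW y hyW hadjxy,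
        hmemW ε x hxnY, hmemW ε y hynY]
      have hxC1 : x ∈ C1 := hx
      have hyC1 : y ∉ C1 := hy.2
      cases ε <;> cases hgx : g x <;> cases hgy : g y <;>
        simp [hxC1, hyC1]
  -- edges from v (resp. b) to Y are consistent for exactly one ε
  have hflipv : ∀ x : V, x ∉ Y → (x ∈ A false ↔ ¬ (x ∈ A true)) := by
    intro x hx
    rw [hmemW false x hx, hmemW true x hx]
    simp only [Bool.false_eq_true, iff_false, iff_true]
  set Sv : Bool → Set (Sym2 V) := fun ε => {e | e ∈ Ev ∧ SignConsistent sign (A ε) e}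
    with hSvdef
  set Sb : Bool → Set (Sym2 V) := fun ε => {e | e ∈ Eb ∧ SignConsistent sign (A ε) e}
    with hSbdef
  have hflipcons : ∀ (z : V), z ∉ Y → ∀ y ∈ Y, ∀ (hzy : G.Adj z y),
      (SignConsistent sign (A false) s(z, y) ↔ ¬ SignConsistent sign (A true) s(z, y)) := by
    intro z hz y hy hzy
    rw [signConsistent_pair_iff, signConsistent_pair_iff]
    have h1 : z ∈ A false ↔ ¬ (z ∈ A true) := hflipv z hz
    have h2 : y ∈ A false ↔ y ∈ A true := by
      rw [hmemY false y hy, hmemY true y hy]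
    revert h1 h2
    generalize (z ∈ A false) = P1
    generalize (z ∈ A true) = P2
    generalize (y ∈ A false) = Q1
    generalize (y ∈ A true) = Q2
    generalize (sign s(z, y) = true) = R
    intro h1 h2
    tauto
  have hSvdisj : Disjoint (Sv false) (Sv true) := Set.disjoint_left.mpr (fun e he1 he2 => by
    obtain ⟨y, hy, heq, hadjvy⟩ := hEvStruct e he1.1
    subst heq
    exact ((hflipcons v hvY y hy hadjvy).mp he1.2) he2.2)
  have hEvU : Ev = Sv false ∪ Sv true := by
    ext e
    constructor
    · intro he
      obtain ⟨y, hy, heq, hadjvy⟩ := hEvStruct e he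
      by_cases hcons : SignConsistent sign (A true) e
      · exact Or.inr ⟨he, hcons⟩
      · refine Or.inl ⟨he, ?_⟩
        rw [heq] at hcons ⊢
        exact (hflipcons v hvY y hy hadjvy).mpr hcons
    · rintro (he | he) <;> exact he.1
  have hSvsum : (Sv false).ncard + (Sv true).ncard = Ev.ncard := by
    rw [hEvU, Set.ncard_union_eq hSvdisj (Set.toFinite _) (Set.toFinite _)]
  have hSbdisj : Disjoint (Sb false) (Sb true) := Set.disjoint_left.mpr (fun e he1 he2 => by
    obtain ⟨y, hy, heq, hadjby⟩ := hEbStruct e he1.1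
    subst heq
    exact ((hflipcons b hbY y hy hadjby).mp he1.2) he2.2)
  have hEbU : Eb = Sb false ∪ Sb true := by
    ext e
    constructor
    · intro he
      obtain ⟨y, hy, heq, hadjby⟩ := hEbStruct e he
      by_cases hcons : SignConsistent sign (A true) e
      · exact Or.inr ⟨he, hcons⟩
      · refine Or.inl ⟨he, ?_⟩
        rw [heq] at hcons ⊢
        exact (hflipcons b hbY y hy hadjby).mpr hcons
    · rintro (he | he) <;> exact he.1
  have hSbsum : (Sb false).ncard + (Sb true).ncard = Eb.ncard := by
    rw [hEbU, Set.ncard_union_eq hSbdisj (Set.toFinite _) (Set.toFinite _)]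
  -- main lower bound for each ε
  have hcount : ∀ ε : Bool,
      betaOn G sign Y + T.ncard + (Sv ε).ncard + (Sb ε).ncard ≤ beta G sign := by
    intro ε
    set SY : Set (Sym2 V) :=
      {e | (e ∈ G.edgeSet ∧ ∀ x ∈ e, x ∈ Y) ∧ SignConsistent sign (A ε) e} with hSYdef
    have hSYsubE : ∀ e ∈ SY, e ∈ EY := fun e he => he.1
    have hTsubE : ∀ e ∈ T, e ∈ EW := fun e he => (hTprops e he).1
    have hSvsubE : ∀ e, e ∈ Sv ε → e ∈ Ev := fun e he => he.1
    have hSbsubE : ∀ e, e ∈ Sb ε → e ∈ Eb := fun e he => he.1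
    have D1 : Disjoint SY T :=
      Set.disjoint_left.mpr (fun e h1 h2 => absurd (hTsubE e h2) (fun h => dYW e (hSYsubE e h1) h))
    have D2 : Disjoint (SY ∪ T) (Sv ε) := Set.disjoint_left.mpr (fun e h1 h2 => by
      rcases h1 with h1 | h1
      · exact dYv e (hSYsubE e h1) (hSvsubE e h2)
      · exact dWv e (hTsubE e h1) (hSvsubE e h2))
    have D3 : Disjoint (SY ∪ T ∪ Sv ε) (Sb ε) := Set.disjoint_left.mpr (fun e h1 h2 => by
      rcases h1 with (h1 | h1) | h1
      · exact dYb e (hSYsubE e h1) (hSbsubE e h2)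
      · exact dWb e (hTsubE e h1) (hSbsubE e h2)
      · exact dvb e (hSvsubE e h1) (hSbsubE e h2))
    have hsub : SY ∪ T ∪ Sv ε ∪ Sb ε ⊆
        {e | e ∈ G.edgeSet ∧ SignConsistent sign (A ε) e} := by
      rintro e (((he | he) | he) | he)
      · exact ⟨he.1.1, he.2⟩
      · exact ⟨(hTprops e he).1.1, (hTprops e he).2 ε⟩
      · exact ⟨he.1.1, he.2⟩
      · exact ⟨he.1.1, he.2⟩
    have hcard : (SY ∪ T ∪ Sv ε ∪ Sb ε).ncard
        = betaOn G sign Y + T.ncard + (Sv ε).ncard + (Sb ε).ncard := by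
      rw [Set.ncard_union_eq D3 (Set.toFinite _) (Set.toFinite _),
        Set.ncard_union_eq D2 (Set.toFinite _) (Set.toFinite _),
        Set.ncard_union_eq D1 (Set.toFinite _) (Set.toFinite _), hSY ε]
    have hle2 : {e | e ∈ G.edgeSet ∧ SignConsistent sign (A ε) e}.ncard ≤ beta G sign := by
      have hb := balCount_le_beta G sign (A ε)
      rwa [balCount] at hb
    calc betaOn G sign Y + T.ncard + (Sv ε).ncard + (Sb ε).ncard
        = (SY ∪ T ∪ Sv ε ∪ Sb ε).ncard := hcard.symm
      _ ≤ {e | e ∈ G.edgeSet ∧ SignConsistent sign (A ε) e}.ncard :=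
          Set.ncard_le_ncard hsub (Set.toFinite _)
      _ ≤ beta G sign := hle2
  have h2B : 2 * betaOn G sign Y + 2 * T.ncard + Ev.ncard + Eb.ncard ≤ 2 * beta G sign := by
    have h1 := hcount false
    have h2 := hcount true
    omega
  have hT4 : 2 * EW.ncard + k + 3 ≤ 4 * T.ncard := by
    rw [hTcard]
    exact natkey k EW.ncard hk1 hmW
  -- final arithmetic
  rw [ge_iff_le, ptOn]
  simp only [pt]
  rw [hcompG, hcompY, hnV, hm, hmY, Nat.card_coe_set_eq]
  have hq1 : (2 : ℚ) * (betaOn G sign Y : ℚ) + 2 * (T.ncard : ℚ) + (Ev.ncard : ℚ)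
      + (Eb.ncard : ℚ) ≤ 2 * (beta G sign : ℚ) := by exact_mod_cast h2B
  have hq2 : (2 : ℚ) * (EW.ncard : ℚ) + (k : ℚ) + 3 ≤ 4 * (T.ncard : ℚ) := by
    exact_mod_cast hT4
  push_cast
  linarith
end
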